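/- arXiv:2507.02896 — 5 statements merged into one kernel-verified Lean document; each statement's English description precedes it below -/
import Mathlib

section
/- Let F be the midpoint of segment BC, G the orthogonal projection of C onto line AB, and θ = ∠ B A C. Then the central angles of the circle on diameter BC satisfy ∠ B F G = 2θ and ∠ C F G = π − 2θ. -/
open EuclideanGeometry RealInnerProductSpace

theorem central_angles_circle_F
    (A B C G F : EuclideanSpace ℝ (Fin 2))
    (hC : ∠ A C B = Real.pi / 2)
    (ha : 0 < dist B C) (hb : 0 < dist A C)
    (hG : G = EuclideanGeometry.orthogonalProjection (affineSpan ℝ {A, B}) C)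
    (hF : F = midpoint ℝ B C)
    (θ : ℝ) (hθ : θ = ∠ B A C) :
    ∠ B F G = 2 * θ ∧ ∠ C F G = Real.pi - 2 * θ := by
  have hpi := Real.pi_pos
  have hBC : B ≠ C := by
    intro h; rw [h] at ha; simp at ha
  have hAC : A ≠ C := by
    intro h; rw [h] at hb; simp at hb
  -- A, C, B are not collinear
  have hncol : ¬ Collinear ℝ ({A, C, B} : Set (EuclideanSpace ℝ (Fin 2))) := by
    intro h
    rcases EuclideanGeometry.collinear_iff_eq_or_eq_or_angle_eq_zero_or_angle_eq_pi.1 h with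
      h | h | h | h
    · exact hAC h
    · exact hBC h
    · rw [hC] at h; linarith
    · rw [hC] at h; linarith
  have hAB : A ≠ B := by
    intro h
    apply hncol
    have : ({A, C, B} : Set (EuclideanSpace ℝ (Fin 2))) = {A, C} := by
      rw [h]; ext x; simp; tauto
    rw [this]
    exact collinear_pair ℝ A C
  -- angle sum
  have hsum : ∠ C A B + ∠ A B C + ∠ B C A = Real.pi :=
    EuclideanGeometry.angle_add_angle_add_angle_eq_pi B hAC
  rw [EuclideanGeometry.angle_comm C A B, ← hθ, EuclideanGeometry.angle_comm B C A, hC] at hsum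
  have hθ0 : 0 < θ := by
    rcases lt_or_eq_of_le (EuclideanGeometry.angle_nonneg B A C) with h | h
    · rw [hθ]; exact h
    · exfalso
      apply hncol
      have hcol : Collinear ℝ ({B, A, C} : Set (EuclideanSpace ℝ (Fin 2))) :=
        EuclideanGeometry.collinear_of_angle_eq_zero h.symm
      have : ({B, A, C} : Set (EuclideanSpace ℝ (Fin 2))) = {A, C, B} := by
        ext x; simp; tauto
      rwa [this] at hcol
  have hABC0 : 0 < ∠ A B C := by
    rcases lt_or_eq_of_le (EuclideanGeometry.angle_nonneg A B C) with h | h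
    · exact h
    · exfalso
      apply hncol
      have hcol : Collinear ℝ ({A, B, C} : Set (EuclideanSpace ℝ (Fin 2))) :=
        EuclideanGeometry.collinear_of_angle_eq_zero h.symm
      have : ({A, B, C} : Set (EuclideanSpace ℝ (Fin 2))) = {A, C, B} := by
        ext x; simp; tauto
      rwa [this] at hcol
  have hABCv : ∠ A B C = Real.pi / 2 - θ := by linarith
  -- projection facts
  set s : AffineSubspace ℝ (EuclideanSpace ℝ (Fin 2)) := affineSpan ℝ {A, B} with hs
  have hAmem : A ∈ s := mem_affineSpan ℝ (by simp)
  have hBmem : B ∈ s := mem_affineSpan ℝ (by simp)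
  have hGmem : G ∈ s := hG ▸ EuclideanGeometry.orthogonalProjection_mem C
  have hperp : C -ᵥ G ∈ s.directionᗮ := by
    have h1 := EuclideanGeometry.orthogonalProjection_mem_orthogonal s C
    rw [AffineSubspace.mem_mk'] at h1
    rw [hG]
    have := Submodule.neg_mem _ h1
    rwa [neg_vsub_eq_vsub_rev] at this
  have hperpB : (inner ℝ (B -ᵥ G) (C -ᵥ G) : ℝ) = 0 := by
    rw [Submodule.mem_orthogonal] at hperp
    exact hperp _ (AffineSubspace.vsub_mem_direction hBmem hGmem)
  -- nondegeneracies about F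
  have hBF : B ≠ F := by
    rw [hF]; intro h
    exact hBC ((midpoint_eq_left_iff (R := ℝ)).1 h.symm)
  have hGF : G ≠ F := by
    intro h
    rw [h, hF] at hperpB
    rw [left_vsub_midpoint, right_vsub_midpoint, ← neg_vsub_eq_vsub_rev C B,
      smul_neg, inner_neg_left, neg_eq_zero, real_inner_smul_left, real_inner_smul_right,
      real_inner_self_eq_norm_sq] at hperpB
    have : ‖C -ᵥ B‖ = 0 := by
      have h2 : ‖C -ᵥ B‖ ^ 2 = 0 := by
        simp only [invOf_eq_inv] at hperpB
        nlinarith [hperpB]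
      simpa [pow_eq_zero_iff] using h2
    rw [norm_eq_zero, vsub_eq_zero_iff_eq] at this
    exact hBC this.symm
  -- dist F G = dist F B
  have dFG : dist F G = dist F B := by
    rw [hF, dist_eq_norm_vsub (EuclideanSpace ℝ (Fin 2)),
      dist_eq_norm_vsub (EuclideanSpace ℝ (Fin 2)),
      midpoint_vsub_left, midpoint_vsub B C G]
    have h2 : ‖(⅟2 : ℝ) • (B -ᵥ G) + (⅟2 : ℝ) • (C -ᵥ G)‖ ^ 2
        = ‖(⅟2 : ℝ) • (C -ᵥ B)‖ ^ 2 := by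
      have hCB : C -ᵥ B = (C -ᵥ G) - (B -ᵥ G) := by
        rw [vsub_sub_vsub_cancel_right]
      rw [hCB, ← smul_add, norm_smul, norm_smul, mul_pow, mul_pow]
      congr 1
      have hc : (inner ℝ (C -ᵥ G) (B -ᵥ G) : ℝ) = 0 := by
        rw [real_inner_comm]; exact hperpB
      rw [norm_add_sq_real, norm_sub_sq_real, hperpB, hc]
      ring
    have := congrArg Real.sqrt h2
    rwa [Real.sqrt_sq (norm_nonneg _), Real.sqrt_sq (norm_nonneg _)] at this
  -- the straight angle at F
  have hBFC : ∠ B F C = Real.pi := hF ▸ EuclideanGeometry.angle_midpoint_eq_pi B C hBC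
  -- ∠ G B C = ∠ A B C
  have hGBC : ∠ G B C = ∠ A B C := by
    obtain ⟨r, hr⟩ := Submodule.mem_span_singleton.1 (by
      have := AffineSubspace.vsub_mem_direction hGmem hBmem
      rwa [hs, direction_affineSpan, vectorSpan_pair] at this)
    have hinner : (inner ℝ (A -ᵥ B) (G -ᵥ B) : ℝ) = (inner ℝ (A -ᵥ B) (C -ᵥ B) : ℝ) := by
      have hCB : C -ᵥ B = (C -ᵥ G) + (G -ᵥ B) := by rw [vsub_add_vsub_cancel]
      rw [hCB, inner_add_right]
      have h0 : (inner ℝ (A -ᵥ B) (C -ᵥ G) : ℝ) = 0 := by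
        rw [Submodule.mem_orthogonal] at hperp
        exact hperp _ (AffineSubspace.vsub_mem_direction hAmem hBmem)
      rw [h0, zero_add]
    have hpos : 0 < (inner ℝ (A -ᵥ B) (C -ᵥ B) : ℝ) := by
      rw [← InnerProductGeometry.cos_angle_mul_norm_mul_norm]
      have hcos : 0 < Real.cos (InnerProductGeometry.angle (A -ᵥ B) (C -ᵥ B)) := by
        have : InnerProductGeometry.angle (A -ᵥ B) (C -ᵥ B) = ∠ A B C := rfl
        rw [this, hABCv]
        exact Real.cos_pos_of_mem_Ioo ⟨by linarith, by linarith⟩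
      have hn1 : 0 < ‖A -ᵥ B‖ := by
        rw [norm_pos_iff, vsub_ne_zero]; exact hAB
      have hn2 : 0 < ‖C -ᵥ B‖ := by
        rw [norm_pos_iff, vsub_ne_zero]; exact fun h => hBC h.symm
      positivity
    have hrpos : 0 < r := by
      have h1 : (inner ℝ (A -ᵥ B) (G -ᵥ B) : ℝ) = r * ‖A -ᵥ B‖ ^ 2 := by
        rw [← hr, real_inner_smul_right, real_inner_self_eq_norm_sq]
      have hn1 : 0 < ‖A -ᵥ B‖ := by
        rw [norm_pos_iff, vsub_ne_zero]; exact hAB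
      nlinarith [hinner ▸ hpos]
    show InnerProductGeometry.angle (G -ᵥ B) (C -ᵥ B) = InnerProductGeometry.angle (A -ᵥ B) (C -ᵥ B)
    rw [← hr]
    exact InnerProductGeometry.angle_smul_left_of_pos _ _ hrpos
  -- ∠ G B F = ∠ G B C
  have hGBF : ∠ G B F = ∠ G B C :=
    EuclideanGeometry.angle_eq_angle_of_angle_eq_pi G hBFC
  -- isosceles triangle F G B
  have hiso : ∠ F G B = ∠ F B G := EuclideanGeometry.angle_eq_angle_of_dist_eq dFG
  have htri : ∠ F G B + ∠ G B F + ∠ B F G = Real.pi :=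
    EuclideanGeometry.angle_add_angle_add_angle_eq_pi B hGF
  have hFBG : ∠ F B G = ∠ G B F := EuclideanGeometry.angle_comm F B G
  have h1 : ∠ B F G = 2 * θ := by
    rw [hiso, hFBG, hGBF, hGBC, hABCv] at htri
    linarith
  refine ⟨h1, ?_⟩
  have h2 := EuclideanGeometry.angle_add_angle_eq_pi_of_angle_eq_pi G hBFC
  rw [EuclideanGeometry.angle_comm G F B, EuclideanGeometry.angle_comm G F C, h1] at h2
  linarith
end

section
/- Let E be the midpoint of segment AC and G the orthogonal projection of C onto line AB. Then the triangles AEG and CEG have equal area, namely area(AEG) = area(CEG) = a·b^3/(4·c^2). -/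
open EuclideanGeometry MeasureTheory
open Set

set_option maxHeartbeats 1000000

local notation "E2" => EuclideanSpace ℝ (Fin 2)

lemma mem_tri (v w x : E2) :
    x ∈ convexHull ℝ ({0, v, w} : Set E2) ↔
      ∃ b c : ℝ, 0 ≤ b ∧ 0 ≤ c ∧ b + c ≤ 1 ∧ x = b • v + c • w := by
  rw [convexHull_insert ⟨v, by simp⟩]
  constructor
  · intro hx
    rw [mem_convexJoin] at hx
    obtain ⟨z0, hz0, z, hz, hxz⟩ := hx
    rw [mem_singleton_iff] at hz0
    subst hz0
    rw [convexHull_pair] at hz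
    obtain ⟨a, b, ha, hb, hab, rfl⟩ := hz
    obtain ⟨s, t, hs, ht, hst, rfl⟩ := hxz
    refine ⟨t * a, t * b, by positivity, by positivity, by nlinarith, ?_⟩
    simp only [smul_zero, zero_add, smul_add, smul_smul]
  · rintro ⟨b, c, hb, hc, hbc, rfl⟩
    rw [mem_convexJoin]
    rcases eq_or_lt_of_le (by positivity : (0:ℝ) ≤ b + c) with h | h
    · refine ⟨0, rfl, v, by rw [convexHull_pair]; exact left_mem_segment _ _ _, ?_⟩
      have hb0 : b = 0 := by linarith
      have hc0 : c = 0 := by linarith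
      simp [hb0, hc0, left_mem_segment]
    · refine ⟨0, rfl, (b / (b + c)) • v + (c / (b + c)) • w, ?_, ?_⟩
      · rw [convexHull_pair]
        exact ⟨b / (b+c), c / (b+c), by positivity, by positivity, by field_simp, rfl⟩
      · refine ⟨1 - (b + c), b + c, by linarith, by linarith, by ring, ?_⟩
        rw [smul_zero, zero_add, smul_add, smul_smul, smul_smul,
          mul_div_cancel₀ _ h.ne', mul_div_cancel₀ _ h.ne']

lemma vol_zero_of_inner (n : E2) (hn : n ≠ 0) (s : Set E2)
    (hs : ∀ x ∈ s, inner (𝕜 := ℝ) n x = (0:ℝ)) : volume (convexHull ℝ s) = 0 := by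
  have hK : convexHull ℝ s ⊆ ((Submodule.span ℝ {n})ᗮ : Submodule ℝ E2) := by
    apply convexHull_min _ (Submodule.convex _)
    intro x hx
    exact Submodule.mem_orthogonal_singleton_iff_inner_right.mpr (hs x hx)
  refine measure_mono_null hK (Measure.addHaar_submodule _ _ ?_)
  intro htop
  have hmem : n ∈ (Submodule.span ℝ {n})ᗮ := htop ▸ Submodule.mem_top
  have : inner (𝕜 := ℝ) n n = (0:ℝ) :=
    Submodule.mem_orthogonal_singleton_iff_inner_right.mp hmem
  exact hn (inner_self_eq_zero.mp this)

lemma vol_tri0 (v w : E2) :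
    volume (convexHull ℝ ({0, v, w} : Set E2))
      = ENNReal.ofReal (|v 0 * w 1 - v 1 * w 0| / 2) := by
  set d : ℝ := v 0 * w 1 - v 1 * w 0 with hd
  set T : Set E2 := convexHull ℝ {0, v, w} with hT
  set T' : Set E2 := convexHull ℝ {v, w, v + w} with hT'
  set f : E2 →ᵃ[ℝ] E2 := AffineMap.homothety ((2⁻¹:ℝ) • (v + w)) (-1) with hf
  have hfx : ∀ x : E2, f x = (v + w) - x := by
    intro x
    simp only [hf, AffineMap.homothety_apply, vsub_eq_sub, vadd_eq_add]
    module
  have hT'f : T' = ⇑f '' T := by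
    rw [hT', hT, AffineMap.image_convexHull]
    congr 1
    ext y
    simp only [mem_image, mem_insert_iff, mem_singleton_iff]
    constructor
    · rintro (rfl | rfl | rfl)
      exacts [⟨w, by simp, by rw [hfx]; abel⟩, ⟨v, by simp, by rw [hfx]; abel⟩,
        ⟨0, by simp, by rw [hfx]; abel⟩]
    · rintro ⟨x, (rfl | rfl | rfl), rfl⟩ <;> rw [hfx]
      · right; right; abel
      · right; left; abel
      · left; abel
  have hmemT' : ∀ x : E2, x ∈ T' ↔ ∃ b c : ℝ,
      0 ≤ b ∧ 0 ≤ c ∧ b + c ≤ 1 ∧ x = (v + w) - (b • v + c • w) := by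
    intro x
    rw [hT'f]
    constructor
    · rintro ⟨y, hy, rfl⟩
      rw [hT, mem_tri] at hy
      obtain ⟨b, c, hb, hc, hbc, rfl⟩ := hy
      exact ⟨b, c, hb, hc, hbc, by rw [hfx]⟩
    · rintro ⟨b, c, hb, hc, hbc, rfl⟩
      exact ⟨b • v + c • w, (mem_tri v w _).2 ⟨b, c, hb, hc, hbc, rfl⟩, by rw [hfx]⟩
  have hrefl : volume T' = volume T := by
    rw [hT'f, hf, Measure.addHaar_image_homothety]
    norm_num [finrank_euclideanSpace_fin]
  have hunion : T ∪ T' = parallelepiped ![v, w] := by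
    ext x
    rw [mem_union, hT, mem_tri, hmemT', mem_parallelepiped_iff]
    constructor
    · rintro (⟨b, c, hb, hc, hbc, rfl⟩ | ⟨b, c, hb, hc, hbc, rfl⟩)
      · refine ⟨![b, c], ⟨?_, ?_⟩, by simp [Fin.sum_univ_two]⟩
        · intro i; fin_cases i <;> simpa
        · intro i; fin_cases i <;> simp <;> linarith
      · refine ⟨![1 - b, 1 - c], ⟨?_, ?_⟩, ?_⟩
        · intro i; fin_cases i <;> simp <;> linarith
        · intro i; fin_cases i <;> simp <;> linarith
        · simp only [Fin.sum_univ_two, Matrix.cons_val_zero, Matrix.cons_val_one, Matrix.head_cons]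
          module
    · rintro ⟨t, ⟨ht0, ht1⟩, rfl⟩
      have ht0' : ∀ i, 0 ≤ t i := fun i => by simpa using ht0 i
      have ht1' : ∀ i, t i ≤ 1 := fun i => by simpa using ht1 i
      rcases le_or_gt (t 0 + t 1) 1 with h | h
      · exact Or.inl ⟨t 0, t 1, ht0' 0, ht0' 1, h, by simp [Fin.sum_univ_two]⟩
      · refine Or.inr ⟨1 - t 0, 1 - t 1, by linarith [ht1' 0], by linarith [ht1' 1],
          by linarith, ?_⟩
        simp only [Fin.sum_univ_two, Matrix.cons_val_zero, Matrix.cons_val_one, Matrix.head_cons]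
        module
  have hP : volume (parallelepiped ![v, w]) = ENNReal.ofReal |d| := by
    rw [← (EuclideanSpace.basisFun (Fin 2) ℝ).addHaar_eq_volume, Measure.addHaar_parallelepiped]
    congr 2
    rw [Module.Basis.det_apply, Matrix.det_fin_two]
    simp only [Module.Basis.toMatrix_apply, OrthonormalBasis.coe_toBasis_repr_apply,
      EuclideanSpace.basisFun_repr, Matrix.cons_val_zero, Matrix.cons_val_one, Matrix.head_cons, hd]
    ring
  rcases eq_or_ne d 0 with hd0 | hd0
  · rw [hd0, abs_zero, zero_div, ENNReal.ofReal_zero, hT]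
    rcases eq_or_ne v 0 with hv | hv
    · rcases eq_or_ne w 0 with hw | hw
      · refine vol_zero_of_inner (EuclideanSpace.single 0 (1:ℝ)) ?_ _ ?_
        · intro h
          have := congrArg (fun z : E2 => z 0) h
          simp at this
        · rintro x (rfl | rfl | rfl)
          · exact inner_zero_right _
          · rw [hv]; exact inner_zero_right _
          · rw [hw]; exact inner_zero_right _
      · refine vol_zero_of_inner ((WithLp.equiv 2 (Fin 2 → ℝ)).symm ![w 1, -(w 0)]) ?_ _ ?_
        · intro h
          have h0 := congrArg (fun z : E2 => z 0) h
          have h1 := congrArg (fun z : E2 => z 1) h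
          simp only [WithLp.equiv_symm_apply, PiLp.toLp_apply, Matrix.cons_val_zero, Matrix.cons_val_one,
            Matrix.head_cons, neg_eq_zero] at h0 h1
          apply hw
          ext i
          fin_cases i <;> simp_all
        · rintro x (rfl | rfl | rfl)
          · exact inner_zero_right _
          · simp only [PiLp.inner_apply, RCLike.inner_apply, conj_trivial, Fin.sum_univ_two,
              WithLp.equiv_symm_apply, PiLp.toLp_apply, Matrix.cons_val_zero, Matrix.cons_val_one,
              Matrix.head_cons]
            have : d = 0 := hd0
            rw [hd] at this
            nlinarith [this]
          · simp only [PiLp.inner_apply, RCLike.inner_apply, conj_trivial, Fin.sum_univ_two,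
              WithLp.equiv_symm_apply, PiLp.toLp_apply, Matrix.cons_val_zero, Matrix.cons_val_one,
              Matrix.head_cons]
            ring
    · refine vol_zero_of_inner ((WithLp.equiv 2 (Fin 2 → ℝ)).symm ![v 1, -(v 0)]) ?_ _ ?_
      · intro h
        have h0 := congrArg (fun z : E2 => z 0) h
        have h1 := congrArg (fun z : E2 => z 1) h
        simp only [WithLp.equiv_symm_apply, PiLp.toLp_apply, Matrix.cons_val_zero, Matrix.cons_val_one,
          Matrix.head_cons, neg_eq_zero] at h0 h1
        apply hv
        ext i
        fin_cases i <;> simp_all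
      · rintro x (rfl | rfl | rfl)
        · exact inner_zero_right _
        · simp only [PiLp.inner_apply, RCLike.inner_apply, conj_trivial, Fin.sum_univ_two,
            WithLp.equiv_symm_apply, PiLp.toLp_apply, Matrix.cons_val_zero, Matrix.cons_val_one,
            Matrix.head_cons]
          ring
        · simp only [PiLp.inner_apply, RCLike.inner_apply, conj_trivial, Fin.sum_univ_two,
            WithLp.equiv_symm_apply, PiLp.toLp_apply, Matrix.cons_val_zero, Matrix.cons_val_one,
            Matrix.head_cons]
          have : d = 0 := hd0
          rw [hd] at this
          nlinarith [this]
  · -- nondegenerate case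
    have hcap : volume (T ∩ T') = 0 := by
      have htop : affineSpan ℝ ({v, w} : Set E2) ≠ ⊤ := by
        intro h
        have hdir : vectorSpan ℝ ({v, w} : Set E2) = ⊤ := by
          rw [← direction_affineSpan, h, AffineSubspace.direction_top]
        rw [vectorSpan_pair] at hdir
        have hv : v ∈ (ℝ ∙ (v -ᵥ w)) := hdir ▸ Submodule.mem_top
        have hw : w ∈ (ℝ ∙ (v -ᵥ w)) := hdir ▸ Submodule.mem_top
        obtain ⟨k, hk⟩ := Submodule.mem_span_singleton.mp hv
        obtain ⟨l, hl⟩ := Submodule.mem_span_singleton.mp hw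
        have hk0 := congrArg (fun z : E2 => z 0) hk
        have hk1 := congrArg (fun z : E2 => z 1) hk
        have hl0 := congrArg (fun z : E2 => z 0) hl
        have hl1 := congrArg (fun z : E2 => z 1) hl
        simp only [vsub_eq_sub, PiLp.smul_apply, PiLp.sub_apply, smul_eq_mul] at hk0 hk1 hl0 hl1
        apply hd0
        rw [hd]
        linear_combination k * ((v 1 - w 1) * hl0 - (v 0 - w 0) * hl1) - (w 1) * hk0 + (w 0) * hk1
      refine measure_mono_null ?_ (Measure.addHaar_affineSubspace volume _ htop)
      rintro x ⟨hx, hx'⟩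
      rw [hT, mem_tri] at hx
      rw [hmemT'] at hx'
      obtain ⟨b, c, hb, hc, hbc, rfl⟩ := hx
      obtain ⟨b', c', hb', hc', hbc', heq⟩ := hx'
      have h0 := congrArg (fun z : E2 => z 0) heq
      have h1 := congrArg (fun z : E2 => z 1) heq
      simp only [PiLp.add_apply, PiLp.sub_apply, PiLp.smul_apply, smul_eq_mul] at h0 h1
      have hbb : (b + b' - 1) * d = 0 := by rw [hd]; linear_combination (w 1) * h0 - (w 0) * h1
      have hcc : (c + c' - 1) * d = 0 := by rw [hd]; linear_combination (v 0) * h1 - (v 1) * h0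
      have hbb' : b + b' = 1 := by
        rcases mul_eq_zero.mp hbb with h | h
        · linarith
        · exact absurd h hd0
      have hcc' : c + c' = 1 := by
        rcases mul_eq_zero.mp hcc with h | h
        · linarith
        · exact absurd h hd0
      have hbc1 : b + c = 1 := by linarith
      have hseg : b • v + c • w ∈ segment ℝ v w := ⟨b, c, hb, hc, hbc1, rfl⟩
      have hch : b • v + c • w ∈ convexHull ℝ ({v, w} : Set E2) := by
        rw [convexHull_pair]; exact hseg
      exact convexHull_subset_affineSpan _ hch
    have hmeasT' : MeasurableSet T' := by
      rw [hT']
      exact ((((Set.finite_singleton _).insert _).insert _).isCompact_convexHull (𝕜 := ℝ)).measurableSet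
    have hkey : volume T + volume T' = ENNReal.ofReal |d| := by
      rw [← hP, ← hunion, ← measure_union_add_inter T hmeasT', hcap, add_zero]
    rw [hrefl] at hkey
    have h2 : 2 * volume T = ENNReal.ofReal |d| := by
      rw [two_mul]; exact hkey
    rw [ENNReal.ofReal_div_of_pos (by norm_num), ENNReal.ofReal_ofNat]
    rw [ENNReal.eq_div_iff (by norm_num) (by norm_num)]
    exact h2

lemma vol_tri (p q r : E2) :
    volume (convexHull ℝ ({p, q, r} : Set E2))
      = ENNReal.ofReal (|(q - p) 0 * (r - p) 1 - (q - p) 1 * (r - p) 0| / 2) := by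
  have himg : ({p, q, r} : Set E2) = (fun x => p + x) '' {0, q - p, r - p} := by
    simp [Set.image_insert_eq]
  have hcoe : (fun x : E2 => p + x) = ⇑((AffineEquiv.constVAdd ℝ E2 p : E2 ≃ᵃ[ℝ] E2) : E2 →ᵃ[ℝ] E2) := by
    funext x
    simp [AffineEquiv.constVAdd_apply]
  rw [himg, hcoe, ← AffineMap.image_convexHull, ← hcoe]
  have himg2 : (fun x : E2 => p + x) '' (convexHull ℝ ({0, q - p, r - p} : Set E2))
      = (fun x : E2 => -p + x) ⁻¹' (convexHull ℝ ({0, q - p, r - p} : Set E2)) := by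
    ext x
    simp only [mem_image, mem_preimage]
    constructor
    · rintro ⟨y, hy, rfl⟩; simpa using hy
    · intro hx; exact ⟨-p + x, hx, by abel⟩
  rw [himg2, measure_preimage_add, vol_tri0]

theorem area_AEG_CEG
    (A B C G E : EuclideanSpace ℝ (Fin 2))
    (hC : ∠ A C B = Real.pi / 2)
    (ha : 0 < dist B C) (hb : 0 < dist A C)
    (hG : G = EuclideanGeometry.orthogonalProjection (affineSpan ℝ {A, B}) C)
    (hE : E = midpoint ℝ A C) :
    volume (convexHull ℝ ({A, E, G} : Set (EuclideanSpace ℝ (Fin 2))))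
        = volume (convexHull ℝ ({C, E, G} : Set (EuclideanSpace ℝ (Fin 2)))) ∧
      volume (convexHull ℝ ({A, E, G} : Set (EuclideanSpace ℝ (Fin 2))))
        = ENNReal.ofReal (dist B C * (dist A C) ^ 3 / (4 * (dist A B) ^ 2)) := by
  set a := dist B C with hadef
  set b := dist A C with hbdef
  set c := dist A B with hcdef
  set p : E2 := A - C with hp
  set q : E2 := B - C with hq
  have hinner : inner (𝕜 := ℝ) p q = (0:ℝ) := by
    rw [hp, hq, ← vsub_eq_sub, ← vsub_eq_sub]
    exact (InnerProductGeometry.inner_eq_zero_iff_angle_eq_pi_div_two _ _).mpr hC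
  have hbnorm : ‖p‖ = b := by rw [hbdef, dist_eq_norm, hp]
  have hanorm : ‖q‖ = a := by rw [hadef, dist_eq_norm, hq]
  have hcnorm : ‖q - p‖ = c := by
    rw [hcdef, dist_eq_norm]
    have : A - B = p - q := by rw [hp, hq]; abel
    rw [this, ← neg_sub, norm_neg]
  have hc2 : c^2 = a^2 + b^2 := by
    rw [← hcnorm, ← hanorm, ← hbnorm, norm_sub_sq_real, real_inner_comm p q, hinner]
    ring
  have hcpos : 0 < c := by
    have h2 : 0 < c^2 := by rw [hc2]; positivity
    have h3 : 0 ≤ c := by rw [hcdef]; exact dist_nonneg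
    rcases h3.eq_or_lt with h | h
    · exfalso; rw [← h] at h2; simp at h2
    · exact h
  -- the projection G
  have hGmem : G ∈ affineSpan ℝ ({A, B} : Set E2) := by
    rw [hG]
    exact (EuclideanGeometry.orthogonalProjection (affineSpan ℝ {A, B}) C).property
  have hAmem : A ∈ affineSpan ℝ ({A, B} : Set E2) := mem_affineSpan ℝ (by simp)
  have hBmem : B ∈ affineSpan ℝ ({A, B} : Set E2) := mem_affineSpan ℝ (by simp)
  have hdir : G -ᵥ A ∈ (affineSpan ℝ ({A, B} : Set E2)).direction :=
    AffineSubspace.vsub_mem_direction hGmem hAmem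
  rw [direction_affineSpan, vectorSpan_pair] at hdir
  obtain ⟨s, hs⟩ := Submodule.mem_span_singleton.mp hdir
  set t : ℝ := -s with htdef
  have hGA : G - A = t • (q - p) := by
    have h1 : G - A = s • (A - B) := by simpa [vsub_eq_sub] using hs.symm
    have h2 : A - B = p - q := by rw [hp, hq]; abel
    rw [h1, h2, htdef, neg_smul, ← smul_neg, neg_sub]
  have hperp := EuclideanGeometry.vsub_orthogonalProjection_mem_direction_orthogonal
      (affineSpan ℝ ({A, B} : Set E2)) C
  rw [← hG] at hperp
  have hBA : B -ᵥ A ∈ (affineSpan ℝ ({A, B} : Set E2)).direction :=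
    AffineSubspace.vsub_mem_direction hBmem hAmem
  have horth : inner (𝕜 := ℝ) (B -ᵥ A) (C -ᵥ G) = (0:ℝ) :=
    (Submodule.mem_orthogonal _ _).mp hperp _ hBA
  have hBA' : B -ᵥ A = q - p := by rw [vsub_eq_sub, hp, hq]; abel
  have hCG : C -ᵥ G = -p - t • (q - p) := by
    have : C -ᵥ G = -(A - C) - (G - A) := by rw [vsub_eq_sub]; abel
    rw [this, ← hp, hGA]
  have hqp2 : inner (𝕜 := ℝ) (q - p) (q - p) = c^2 := by
    rw [real_inner_self_eq_norm_sq, hcnorm]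
  have hqpp : inner (𝕜 := ℝ) (q - p) p = -(b^2) := by
    rw [inner_sub_left, real_inner_comm p q, hinner, real_inner_self_eq_norm_sq, hbnorm]
    ring
  have ht : t = b^2 / c^2 := by
    rw [hBA', hCG, inner_sub_right, inner_neg_right, inner_smul_right, hqpp, hqp2] at horth
    field_simp
    linarith [horth]
  have htpos : 0 ≤ t := by rw [ht]; positivity
  -- coordinates
  have hinnerc : p 0 * q 0 + p 1 * q 1 = 0 := by
    rw [← hinner]
    simp only [PiLp.inner_apply, RCLike.inner_apply, conj_trivial, Fin.sum_univ_two]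
    ring
  have hb2c : b^2 = p 0^2 + p 1^2 := by
    rw [← hbnorm, ← real_inner_self_eq_norm_sq]
    simp only [PiLp.inner_apply, RCLike.inner_apply, conj_trivial, Fin.sum_univ_two]
    ring
  have ha2c : a^2 = q 0^2 + q 1^2 := by
    rw [← hanorm, ← real_inner_self_eq_norm_sq]
    simp only [PiLp.inner_apply, RCLike.inner_apply, conj_trivial, Fin.sum_univ_two]
    ring
  have habs : |p 1 * q 0 - p 0 * q 1| = a * b := by
    have hsq : (p 1 * q 0 - p 0 * q 1)^2 = (a*b)^2 := by
      linear_combination (-(p 0^2 + p 1^2)) * ha2c - a^2 * hb2c -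
        (p 0 * q 0 + p 1 * q 1) * hinnerc
    rw [← Real.sqrt_sq_eq_abs, hsq, Real.sqrt_sq (by positivity)]
  have hEA : E - A = (-(2⁻¹ : ℝ)) • p := by
    rw [hE, hp, midpoint_eq_smul_add, invOf_eq_inv]
    module
  have hEC : E - C = (2⁻¹ : ℝ) • p := by
    rw [hE, hp, midpoint_eq_smul_add, invOf_eq_inv]
    module
  have hGC : G - C = t • (q - p) + p := by
    have : G - C = (G - A) + (A - C) := by abel
    rw [this, hGA, ← hp]
  have hcoordEA : ∀ i, (E - A) i = -(2⁻¹) * p i := by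
    intro i; rw [hEA]; simp
  have hcoordGA : ∀ i, (G - A) i = t * (q i - p i) := by
    intro i; rw [hGA]; simp
  have hcoordEC : ∀ i, (E - C) i = 2⁻¹ * p i := by
    intro i; rw [hEC]; simp
  have hcoordGC : ∀ i, (G - C) i = t * (q i - p i) + p i := by
    intro i; rw [hGC]; simp
  have hval1 : |(E - A) 0 * (G - A) 1 - (E - A) 1 * (G - A) 0| / 2
      = a * b^3 / (4 * c^2) := by
    rw [hcoordEA 0, hcoordEA 1, hcoordGA 0, hcoordGA 1]
    have hre : -(2⁻¹) * p 0 * (t * (q 1 - p 1)) - -(2⁻¹) * p 1 * (t * (q 0 - p 0))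
        = (t/2) * (p 1 * q 0 - p 0 * q 1) := by ring
    rw [hre, abs_mul, abs_of_nonneg (by positivity : (0:ℝ) ≤ t/2), habs, ht]
    field_simp
    ring
  have hval2 : |(E - C) 0 * (G - C) 1 - (E - C) 1 * (G - C) 0| / 2
      = a * b^3 / (4 * c^2) := by
    rw [hcoordEC 0, hcoordEC 1, hcoordGC 0, hcoordGC 1]
    have hre : 2⁻¹ * p 0 * (t * (q 1 - p 1) + p 1) - 2⁻¹ * p 1 * (t * (q 0 - p 0) + p 0)
        = (t/2) * (p 0 * q 1 - p 1 * q 0) := by ring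
    rw [hre, abs_mul, abs_of_nonneg (by positivity : (0:ℝ) ≤ t/2), abs_sub_comm, habs, ht]
    field_simp
    ring
  have h1 := vol_tri A E G
  have h2 := vol_tri C E G
  rw [hval1] at h1
  rw [hval2] at h2
  refine ⟨by rw [h1, h2], by rw [h1]⟩
end

section
/- Let F be the midpoint of segment BC and G the orthogonal projection of C onto line AB. Then the triangles CFG and BFG have equal area, namely area(CFG) = area(BFG) = a^3·b/(4·c^2). -/
open EuclideanGeometry MeasureTheory Set Pointwise

noncomputable section

private abbrev E2 := EuclideanSpace ℝ (Fin 2)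

private def ee (i : Fin 2) : E2 := EuclideanSpace.single i 1

private lemma corner_eq :
    convexHull ℝ ({0, ee 0, ee 1} : Set E2)
      = {x : E2 | 0 ≤ x 0 ∧ 0 ≤ x 1 ∧ x 0 + x 1 ≤ 1} := by
  apply Subset.antisymm
  · apply convexHull_min
    · rintro x (rfl | rfl | rfl) <;>
        simp [ee, EuclideanSpace.single_apply]
    · rintro x ⟨hx0, hx1, hxs⟩ y ⟨hy0, hy1, hys⟩ a b ha hb hab
      refine ⟨?_, ?_, ?_⟩ <;>
        simp only [PiLp.add_apply, PiLp.smul_apply, smul_eq_mul] <;> nlinarith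
  · rintro x ⟨hx0, hx1, hxs⟩
    have hx : x = ∑ i : Fin 3, (![1 - x 0 - x 1, x 0, x 1] i) • (![0, ee 0, ee 1] i) := by
      rw [Fin.sum_univ_three]
      ext i
      fin_cases i <;>
        simp [ee, EuclideanSpace.single_apply, PiLp.add_apply, PiLp.smul_apply] <;> ring
    rw [hx]
    refine (convex_convexHull ℝ _).sum_mem ?_ ?_ ?_
    · intro i _
      fin_cases i <;> simp <;> linarith
    · rw [Fin.sum_univ_three]; simp; ring
    · intro i _
      refine subset_convexHull ℝ _ ?_
      fin_cases i <;> simp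

private lemma corner_volume :
    volume (convexHull ℝ ({0, ee 0, ee 1} : Set E2)) = ENNReal.ofReal (1/2) := by
  have hTc : IsCompact (convexHull ℝ ({0, ee 0, ee 1} : Set E2)) :=
    (Set.toFinite _).isCompact_convexHull ℝ
  rw [corner_eq]
  rw [corner_eq] at hTc
  set T : Set E2 := {x : E2 | 0 ≤ x 0 ∧ 0 ≤ x 1 ∧ x 0 + x 1 ≤ 1} with hT
  have hTm : MeasurableSet T := hTc.isClosed.measurableSet
  set o : E2 := ee 0 + ee 1 with ho
  have ho0 : o 0 = 1 := by simp [ho, ee, EuclideanSpace.single_apply, PiLp.add_apply]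
  have ho1 : o 1 = 1 := by simp [ho, ee, EuclideanSpace.single_apply, PiLp.add_apply]
  have hoo : (inner ℝ o o : ℝ) = 2 := by
    rw [PiLp.inner_apply, Fin.sum_univ_two]; norm_num [ho0, ho1]
  set σ : E2 → E2 := fun x => o - x with hσ
  have hσp : MeasurePreserving σ volume volume := by
    have h1 := measurePreserving_add_left (volume : Measure E2) o
    have h2 := Measure.measurePreserving_neg (volume : Measure E2)
    have heq : σ = (fun x => o + x) ∘ (fun x => -x) := by
      funext x; simp [hσ, sub_eq_add_neg]
    rw [heq]; exact h1.comp h2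
  set Q : Set E2 := {x : E2 | 0 ≤ x 0 ∧ x 0 ≤ 1 ∧ 0 ≤ x 1 ∧ x 1 ≤ 1} with hQ
  have hQvol : volume Q = 1 := by
    have hmp := EuclideanSpace.volume_preserving_symm_measurableEquiv_toLp (Fin 2)
    have hpre : Q = (MeasurableEquiv.toLp 2 (Fin 2 → ℝ)).symm ⁻¹' (Set.Icc 0 1) := by
      ext x
      simp [hQ, Set.mem_Icc, Pi.le_def, Fin.forall_fin_two]
      tauto
    rw [hpre, hmp.measure_preimage measurableSet_Icc.nullMeasurableSet]
    rw [Real.volume_Icc_pi]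
    simp
  have hunion : Q = T ∪ σ ⁻¹' T := by
    ext x
    simp only [hQ, hT, Set.mem_union, Set.mem_setOf_eq, Set.mem_preimage, hσ,
      PiLp.sub_apply, ho0, ho1]
    constructor
    · rintro ⟨h1, h2, h3, h4⟩
      by_cases h : x 0 + x 1 ≤ 1
      · left; exact ⟨h1, h3, h⟩
      · right; refine ⟨by linarith, by linarith, by linarith⟩
    · rintro (⟨h1, h2, h3⟩ | ⟨h1, h2, h3⟩) <;>
        exact ⟨by linarith, by linarith, by linarith, by linarith⟩
  have hinter : volume (T ∩ σ ⁻¹' T) = 0 := by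
    have hsub : T ∩ σ ⁻¹' T ⊆ {x : E2 | inner ℝ o x = (1:ℝ)} := by
      rintro x ⟨hx1, hx2⟩
      simp only [hT, Set.mem_setOf_eq] at hx1
      simp only [hT, Set.mem_preimage, Set.mem_setOf_eq, hσ, PiLp.sub_apply, ho0, ho1] at hx2
      obtain ⟨h1, h2, h3⟩ := hx1
      obtain ⟨g1, g2, g3⟩ := hx2
      simp only [Set.mem_setOf_eq, PiLp.inner_apply, RCLike.inner_apply, Fin.sum_univ_two,
        starRingEnd_apply, ho0, ho1, star_one, one_mul]
      linarith
    refine measure_mono_null hsub ?_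
    have heq : {x : E2 | inner ℝ o x = (1:ℝ)}
        = (fun x => x + -(((1:ℝ)/2) • o)) ⁻¹' ((ℝ ∙ o)ᗮ : Set E2) := by
      ext x
      simp only [Set.mem_preimage, SetLike.mem_coe,
        Submodule.mem_orthogonal_singleton_iff_inner_right,
        inner_add_right, inner_neg_right, inner_smul_right, Set.mem_setOf_eq, hoo]
      constructor <;> intro h <;> linarith
    rw [heq, measure_preimage_add_right]
    refine Measure.addHaar_submodule _ _ ?_
    intro htop
    have hmem : o ∈ (ℝ ∙ o)ᗮ := htop ▸ Submodule.mem_top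
    have h2 := Submodule.mem_orthogonal_singleton_iff_inner_right.mp hmem
    rw [hoo] at h2
    norm_num at h2
  have hσT : volume (σ ⁻¹' T) = volume T := hσp.measure_preimage hTm.nullMeasurableSet
  have hkey : volume Q + volume (T ∩ σ ⁻¹' T) = volume T + volume (σ ⁻¹' T) := by
    rw [hunion]
    exact measure_union_add_inter _ (hσp.measurable hTm)
  rw [hQvol, hinter, hσT, add_zero] at hkey
  have h2T : (2 : ENNReal) * volume T = 1 := by rw [two_mul]; exact hkey.symm
  have hhalf : volume T = 1 / 2 :=
    (ENNReal.eq_div_iff (by norm_num) (by norm_num)).mpr h2T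
  rw [hhalf]
  rw [ENNReal.ofReal_div_of_pos (by norm_num)]
  norm_num

private lemma triangle_area (p q r : E2) :
    volume (convexHull ℝ ({p, q, r} : Set E2))
      = ENNReal.ofReal
          (|(q 0 - p 0) * (r 1 - p 1) - (q 1 - p 1) * (r 0 - p 0)| / 2) := by
  classical
  set bas := (EuclideanSpace.basisFun (Fin 2) ℝ).toBasis with hbas
  set M : Matrix (Fin 2) (Fin 2) ℝ :=
    !![q 0 - p 0, r 0 - p 0; q 1 - p 1, r 1 - p 1] with hM
  set L : E2 →ₗ[ℝ] E2 := Matrix.toLin bas bas M with hL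
  have hdet : LinearMap.det L = (q 0 - p 0) * (r 1 - p 1) - (q 1 - p 1) * (r 0 - p 0) := by
    rw [hL, LinearMap.det_toLin, hM, Matrix.det_fin_two]
    simp [Matrix.cons_val_zero, Matrix.cons_val_one]
    ring
  have hbase : ∀ i : Fin 2, bas i = ee i := by
    intro i
    simp [hbas, ee, EuclideanSpace.basisFun_apply]
  have hL0 : L (ee 0) = q - p := by
    rw [← hbase 0, hL, Matrix.toLin_self]
    ext i
    fin_cases i <;>
      simp [hM, hbase, ee, EuclideanSpace.single_apply, Fin.sum_univ_two,
        PiLp.add_apply, PiLp.smul_apply, PiLp.sub_apply]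
  have hL1 : L (ee 1) = r - p := by
    rw [← hbase 1, hL, Matrix.toLin_self]
    ext i
    fin_cases i <;>
      simp [hM, hbase, ee, EuclideanSpace.single_apply, Fin.sum_univ_two,
        PiLp.add_apply, PiLp.smul_apply, PiLp.sub_apply]
  have himg : convexHull ℝ ({p, q, r} : Set E2)
      = p +ᵥ (L '' convexHull ℝ ({0, ee 0, ee 1} : Set E2)) := by
    rw [L.image_convexHull]
    rw [show L '' {0, ee 0, ee 1} = {0, q - p, r - p} by
      rw [Set.image_insert_eq, Set.image_insert_eq, Set.image_singleton, map_zero, hL0, hL1]]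
    rw [← convexHull_vadd]
    congr 1
    rw [show (p +ᵥ ({0, q - p, r - p} : Set E2)) = (fun x => p + x) '' {0, q - p, r - p} from rfl]
    rw [Set.image_insert_eq, Set.image_insert_eq, Set.image_singleton]
    simp [add_sub_cancel]
  rw [himg]
  have hvadd : volume (p +ᵥ (L '' convexHull ℝ ({0, ee 0, ee 1} : Set E2)))
      = volume (L '' convexHull ℝ ({0, ee 0, ee 1} : Set E2)) := by
    exact measure_vadd _ _ _
  rw [hvadd, Measure.addHaar_image_linearMap, corner_volume, hdet,
    ← ENNReal.ofReal_mul (abs_nonneg _)]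
  congr 1
  ring

theorem area_CFG_BFG
    (A B C G F : EuclideanSpace ℝ (Fin 2))
    (hC : ∠ A C B = Real.pi / 2)
    (ha : 0 < dist B C) (hb : 0 < dist A C)
    (hG : G = EuclideanGeometry.orthogonalProjection (affineSpan ℝ {A, B}) C)
    (hF : F = midpoint ℝ B C) :
    volume (convexHull ℝ ({C, F, G} : Set (EuclideanSpace ℝ (Fin 2))))
        = volume (convexHull ℝ ({B, F, G} : Set (EuclideanSpace ℝ (Fin 2)))) ∧
      volume (convexHull ℝ ({C, F, G} : Set (EuclideanSpace ℝ (Fin 2))))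
        = ENNReal.ofReal ((dist B C) ^ 3 * dist A C / (4 * (dist A B) ^ 2)) := by
  classical
  set a := dist B C with ha'
  set b := dist A C with hb'
  set c := dist A B with hc'
  -- right angle gives inner product zero
  have hor : (inner ℝ (A - C) (B - C) : ℝ) = 0 := by
    rw [show A - C = A -ᵥ C from rfl, show B - C = B -ᵥ C from rfl]
    exact (InnerProductGeometry.inner_eq_zero_iff_angle_eq_pi_div_two _ _).mpr hC
  -- distances squared
  have hA2 : a ^ 2 = ‖B - C‖ ^ 2 := by rw [ha', dist_eq_norm]
  have hB2 : b ^ 2 = ‖A - C‖ ^ 2 := by rw [hb', dist_eq_norm]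
  have hC2 : c ^ 2 = ‖A - B‖ ^ 2 := by rw [hc', dist_eq_norm]
  have hpyth : c ^ 2 = a ^ 2 + b ^ 2 := by
    rw [hA2, hB2, hC2, show A - B = (A - C) - (B - C) by abel]
    rw [← real_inner_self_eq_norm_sq, ← real_inner_self_eq_norm_sq, ← real_inner_self_eq_norm_sq]
    simp only [inner_sub_sub_self]
    rw [real_inner_comm (B - C) (A - C)] at *
    linarith [hor]
  have hc0 : c ≠ 0 := by
    intro h
    rw [h] at hpyth
    nlinarith
  have hcpos : 0 < c := lt_of_le_of_ne dist_nonneg (Ne.symm hc0)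
  set t : ℝ := a ^ 2 / c ^ 2 with ht
  -- identify G explicitly
  have hGeq : G = (-t) • (B -ᵥ A) +ᵥ B := by
    set s := affineSpan ℝ ({A, B} : Set E2) with hs
    have hAs : A ∈ s := subset_affineSpan ℝ _ (by simp)
    have hBs : B ∈ s := subset_affineSpan ℝ _ (by simp)
    have hmem : (-t) • (B -ᵥ A) +ᵥ B ∈ s := s.smul_vsub_vadd_mem _ hBs hAs hBs
    have hperp : (-t) • (B -ᵥ A) +ᵥ B ∈ AffineSubspace.mk' C s.directionᗮ := by
      rw [AffineSubspace.mem_mk']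
      have hdir : s.direction = ℝ ∙ (A -ᵥ B) := by
        rw [hs, direction_affineSpan, vectorSpan_pair]
      rw [hdir, Submodule.mem_orthogonal_singleton_iff_inner_right]
      have : ((-t) • (B -ᵥ A) +ᵥ B) -ᵥ C = (-t) • (B - A) + (B - C) := by
        simp [vsub_eq_sub, vadd_eq_add]
        abel
      rw [this]
      rw [inner_add_right, inner_smul_right]
      have e1 : (inner ℝ (A -ᵥ B) (B - A) : ℝ) = -(c ^ 2) := by
        rw [show (A -ᵥ B : E2) = A - B from rfl, show (B - A : E2) = -(A - B) by abel,
          inner_neg_right, real_inner_self_eq_norm_sq, ← hC2]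
      have e2 : (inner ℝ (A -ᵥ B) (B - C) : ℝ) = -(a ^ 2) := by
        rw [show (A -ᵥ B : E2) = (A - C) - (B - C) by rw [vsub_eq_sub]; abel]
        rw [inner_sub_left, hor, real_inner_self_eq_norm_sq, ← hA2]
        ring
      rw [e1, e2, ht]
      field_simp
      ring
    have hsing := EuclideanGeometry.inter_eq_singleton_orthogonalProjection (s := s) C
    have : (-t) • (B -ᵥ A) +ᵥ B ∈ ({↑(EuclideanGeometry.orthogonalProjection s C)} : Set E2) := by
      rw [← hsing]; exact ⟨hmem, hperp⟩
    rw [Set.mem_singleton_iff] at this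
    rw [hG, ← this]
  -- coordinates
  have hGi : ∀ i, G i = B i - t * (B i - A i) := by
    intro i
    rw [hGeq]
    simp [vsub_eq_sub, vadd_eq_add, PiLp.add_apply, PiLp.smul_apply, PiLp.sub_apply]
    ring
  have hFi : ∀ i, F i = (B i + C i) / 2 := by
    intro i
    rw [hF, midpoint_eq_smul_add]
    simp [PiLp.add_apply, PiLp.smul_apply]
    ring
  set v0 := B 0 - C 0 with hv0
  set v1 := B 1 - C 1 with hv1
  set w0 := B 0 - A 0 with hw0
  set w1 := B 1 - A 1 with hw1
  have ha2 : a ^ 2 = v0 ^ 2 + v1 ^ 2 := by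
    rw [hA2, ← real_inner_self_eq_norm_sq, PiLp.inner_apply, Fin.sum_univ_two]
    simp [PiLp.sub_apply, hv0, hv1]
  have hb2 : b ^ 2 = (v0 - w0) ^ 2 + (v1 - w1) ^ 2 := by
    rw [hB2, ← real_inner_self_eq_norm_sq, PiLp.inner_apply, Fin.sum_univ_two]
    simp [PiLp.sub_apply, hv0, hv1, hw0, hw1]
  have hor' : (A 0 - C 0) * (B 0 - C 0) + (A 1 - C 1) * (B 1 - C 1) = 0 := by
    rw [PiLp.inner_apply, Fin.sum_univ_two] at hor
    simp [PiLp.sub_apply] at hor; linear_combination hor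
  have hp : (v0 - w0) * v0 + (v1 - w1) * v1 = 0 := by
    rw [hv0, hv1, hw0, hw1]
    linear_combination hor'
  set d := v0 * w1 - v1 * w0 with hd
  have hd2 : d ^ 2 = a ^ 2 * b ^ 2 := by
    rw [ha2, hb2, hd]
    linear_combination (-((v0 - w0) * v0 + (v1 - w1) * v1)) * hp
  have habs : |d| = a * b := by
    have h1 : |d| = Real.sqrt (d ^ 2) := (Real.sqrt_sq_eq_abs d).symm
    rw [h1, hd2, show a ^ 2 * b ^ 2 = (a * b) ^ 2 by ring,
      Real.sqrt_sq (by positivity)]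
  -- the two determinant expressions
  have hD1 : (F 0 - C 0) * (G 1 - C 1) - (F 1 - C 1) * (G 0 - C 0) = -(t / 2) * d := by
    rw [hFi 0, hFi 1, hGi 0, hGi 1, hd, hv0, hv1, hw0, hw1]
    ring
  have hD2 : (F 0 - B 0) * (G 1 - B 1) - (F 1 - B 1) * (G 0 - B 0) = (t / 2) * d := by
    rw [hFi 0, hFi 1, hGi 0, hGi 1, hd, hv0, hv1, hw0, hw1]
    ring
  have habs1 : |(F 0 - C 0) * (G 1 - C 1) - (F 1 - C 1) * (G 0 - C 0)| = (t / 2) * (a * b) := by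
    rw [hD1, abs_mul, abs_neg, ← habs]
    congr 1
    rw [abs_of_nonneg]
    positivity
  have habs2 : |(F 0 - B 0) * (G 1 - B 1) - (F 1 - B 1) * (G 0 - B 0)| = (t / 2) * (a * b) := by
    rw [hD2, abs_mul, ← habs]
    congr 1
    rw [abs_of_nonneg]
    positivity
  rw [triangle_area C F G, triangle_area B F G, habs1, habs2]
  refine ⟨rfl, ?_⟩
  congr 1
  rw [ht]
  field_simp
  ring

end
end

section
/- (Region B) Let D be the midpoint of segment AB and θ = ∠ B A C. The circular segment of the circle with center D and radius c/2 cut off by the chord BC, on the side of line BC opposite to A — that is, the set of points x with dist x D ≤ c/2 lying on the opposite side of the line through B and C from A — has two-dimensional Lebesgue measure c^2·θ/4 − a·b/4. -/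
open EuclideanGeometry MeasureTheory Real Set

local notation "E2" => EuclideanSpace ℝ (Fin 2)

lemma seg_integral {r d : ℝ} (hr : 0 < r) (hd0 : 0 ≤ d) (hdr : d ≤ r) :
    ∫ t in d..r, 2 * Real.sqrt (r^2 - t^2)
      = r^2 * (π/2 - Real.arcsin (d/r)) - d * Real.sqrt (r^2 - d^2) := by
  have hdr1 : d / r ≤ 1 := (div_le_one hr).2 hdr
  have hdr0 : 0 ≤ d / r := div_nonneg hd0 hr.le
  set α := Real.arcsin (d / r) with hα
  have hα0 : 0 ≤ α := Real.arcsin_nonneg.2 hdr0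
  have hα2 : α ≤ π / 2 := Real.arcsin_le_pi_div_two _
  have hsin : Real.sin α = d / r := Real.sin_arcsin (by linarith) hdr1
  have hcos : Real.cos α = Real.sqrt (1 - (d/r)^2) := Real.cos_arcsin _
  have hsub := intervalIntegral.integral_comp_smul_deriv
      (f := fun φ => r * Real.sin φ) (f' := fun φ => r * Real.cos φ)
      (g := fun t => 2 * Real.sqrt (r^2 - t^2)) (a := α) (b := π/2)
      (fun x _ => (Real.hasDerivAt_sin x).const_mul r)
      (Continuous.continuousOn (by continuity))
      (by continuity)
  have huIcc : Set.uIcc α (π/2) = Set.Icc α (π/2) := Set.uIcc_of_le hα2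
  have hcongr : ∀ x ∈ Set.uIcc α (π/2),
      (r * Real.cos x) • (2 * Real.sqrt (r^2 - (r * Real.sin x)^2))
        = 2 * r^2 * Real.cos x ^ 2 := by
    intro x hx
    rw [huIcc] at hx
    have hcx : 0 ≤ Real.cos x :=
      Real.cos_nonneg_of_mem_Icc ⟨by linarith [hx.1], hx.2⟩
    have : r^2 - (r * Real.sin x)^2 = (r * Real.cos x)^2 := by
      have := Real.sin_sq_add_cos_sq x; nlinarith
    rw [this, Real.sqrt_sq (by positivity)]
    simp [smul_eq_mul]; ring
  have hLHS : ∫ x in α..(π/2), (r * Real.cos x) • ((fun t => 2 * Real.sqrt (r^2 - t^2)) ((fun φ => r * Real.sin φ) x))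
      = ∫ x in α..(π/2), 2 * r^2 * Real.cos x ^ 2 :=
    intervalIntegral.integral_congr hcongr
  simp only [Function.comp] at hsub
  rw [hLHS] at hsub
  have he1 : r * Real.sin α = d := by rw [hsin]; field_simp
  have he2 : r * Real.sin (π/2) = r := by simp
  rw [he1, he2] at hsub
  rw [← hsub, intervalIntegral.integral_const_mul, integral_cos_sq]
  have hcosd : Real.cos α = Real.sqrt (r^2 - d^2) / r := by
    rw [hcos]
    rw [show 1 - (d/r)^2 = (r^2 - d^2)/r^2 by field_simp]
    rw [Real.sqrt_div (by nlinarith), Real.sqrt_sq hr.le]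
  rw [Real.cos_pi_div_two, Real.sin_pi_div_two, hcosd, hsin]
  have : Real.sqrt (r^2 - d^2) / r * (d / r) = d * Real.sqrt (r^2-d^2) / r^2 := by ring
  field_simp
  ring

lemma volume_halfdisk {r d : ℝ} (hr : 0 < r) (hd0 : 0 ≤ d) (hdr : d ≤ r) :
    volume {p : ℝ × ℝ | p.1^2 + p.2^2 ≤ r^2 ∧ d < p.1}
      = ENNReal.ofReal (∫ t in d..r, 2 * Real.sqrt (r^2 - t^2)) := by
  set S := {p : ℝ × ℝ | p.1^2 + p.2^2 ≤ r^2 ∧ d < p.1} with hS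
  have hmeas : MeasurableSet S := by
    apply MeasurableSet.inter
    · exact measurableSet_le ((measurable_fst.pow_const 2).add (measurable_snd.pow_const 2))
        measurable_const
    · exact measurableSet_lt measurable_const measurable_fst
  rw [MeasureTheory.Measure.volume_eq_prod]
  rw [Measure.prod_apply hmeas]
  have hslice : (fun t => volume (Prod.mk t ⁻¹' S))
      = (Ioc d r).indicator (fun t => ENNReal.ofReal (2 * Real.sqrt (r^2 - t^2))) := by
    funext t
    rw [Set.indicator_apply]
    by_cases ht : t ∈ Ioc d r
    · have hsq : (0:ℝ) ≤ r^2 - t^2 := by nlinarith [ht.1, ht.2]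
      have : Prod.mk t ⁻¹' S = Icc (-Real.sqrt (r^2 - t^2)) (Real.sqrt (r^2 - t^2)) := by
        ext y
        simp only [hS, mem_preimage, mem_setOf_eq, mem_Icc]
        constructor
        · rintro ⟨h1, -⟩
          have : |y| ≤ Real.sqrt (r^2 - t^2) := by
            rw [← Real.sqrt_sq_eq_abs]
            exact Real.sqrt_le_sqrt (by linarith)
          exact abs_le.1 this
        · rintro ⟨h1, h2⟩
          refine ⟨?_, ht.1⟩
          have : |y| ≤ Real.sqrt (r^2 - t^2) := abs_le.2 ⟨h1, h2⟩
          have := (Real.le_sqrt (abs_nonneg y) hsq).1 this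
          rw [sq_abs] at this
          linarith
      rw [this, Real.volume_Icc, if_pos ht]
      congr 1
      have := Real.sqrt_nonneg (r^2 - t^2); ring
    · have : Prod.mk t ⁻¹' S = ∅ := by
        ext y
        simp only [hS, mem_preimage, mem_setOf_eq, mem_empty_iff_false, iff_false, not_and]
        intro h1 h2
        simp only [mem_Ioc, not_and, not_le] at ht
        nlinarith [ht h2, sq_nonneg y]
      rw [this, if_neg ht]
      simp
  rw [hslice]
  rw [show lintegral volume ((Ioc d r).indicator fun t => ENNReal.ofReal (2 * Real.sqrt (r^2 - t^2)))
      = ∫⁻ t, (Ioc d r).indicator (fun t => ENNReal.ofReal (2 * Real.sqrt (r^2 - t^2))) t from rfl,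
    lintegral_indicator measurableSet_Ioc]
  have hcont : Continuous fun t : ℝ => 2 * Real.sqrt (r^2 - t^2) := by continuity
  have hint : IntegrableOn (fun t : ℝ => 2 * Real.sqrt (r^2 - t^2)) (Ioc d r) :=
    hcont.integrableOn_Ioc
  rw [← MeasureTheory.ofReal_integral_eq_lintegral_ofReal hint
    (Filter.Eventually.of_forall fun t => by positivity)]
  rw [intervalIntegral.integral_of_le hdr]

lemma side_aux {V : Type*} [NormedAddCommGroup V] [InnerProductSpace ℝ V]
    (L : AffineSubspace ℝ V) (v : V) (k : ℝ) (A : V)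
    (hL : ∀ y, y ∈ L ↔ inner ℝ v y = k) (hA : inner ℝ v A < k) (x : V) :
    L.SOppSide x A ↔ k < (inner ℝ v x : ℝ) := by
  constructor
  · rintro ⟨⟨p₁, hp₁, p₂, hp₂, hray⟩, hx, -⟩
    have h₁ : (inner ℝ v p₁ : ℝ) = k := (hL p₁).1 hp₁
    have h₂ : (inner ℝ v p₂ : ℝ) = k := (hL p₂).1 hp₂
    have hray' : SameRay ℝ ((inner ℝ v (x -ᵥ p₁) : ℝ)) ((inner ℝ v (p₂ -ᵥ A) : ℝ)) :=
      hray.map ((innerSL ℝ v).toLinearMap)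
    simp only [vsub_eq_sub, inner_sub_right, h₁, h₂] at hray'
    have hpos : (0:ℝ) < k - inner ℝ v A := by linarith
    by_contra hle
    push_neg at hle
    have hne : (inner ℝ v x : ℝ) - k ≠ 0 := by
      intro h
      exact hx ((hL x).2 (by linarith [sub_eq_zero.1 h]))
    obtain ⟨r₁, r₂, hr₁, hr₂, heq⟩ := hray'.exists_pos hne (by positivity)
    simp only [smul_eq_mul] at heq
    nlinarith
  · intro h
    have hEA : (inner ℝ v A : ℝ) < inner ℝ v x := by linarith
    set t : ℝ := (k - inner ℝ v A) / (inner ℝ v x - inner ℝ v A) with htdef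
    have ht0 : 0 < t := div_pos (by linarith) (by linarith)
    have ht1 : t ≤ 1 := (div_le_one (by linarith)).2 (by linarith)
    set q : V := t • (x - A) + A with hq
    have hqk : (inner ℝ v q : ℝ) = k := by
      rw [hq]
      rw [inner_add_right, real_inner_smul_right, inner_sub_right, htdef,
        div_mul_cancel₀ _ (by linarith : (inner ℝ v x : ℝ) - inner ℝ v A ≠ 0)]
      ring
    have hqL : q ∈ L := (hL q).2 hqk
    refine ⟨⟨q, hqL, q, hqL, ?_⟩, fun hxL => ?_, fun hAL => ?_⟩
    · have e1 : x -ᵥ q = (1 - t) • (x - A) := by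
        simp only [hq, vsub_eq_sub, sub_smul, one_smul]
        abel
      have e2 : q -ᵥ A = t • (x - A) := by simp [hq]
      rw [e1, e2]
      exact (SameRay.sameRay_nonneg_smul_left (x - A) (by linarith)).nonneg_smul_right ht0.le
    · have := (hL x).1 hxL; linarith
    · have := (hL A).1 hAL; linarith

set_option maxHeartbeats 1000000 in
theorem region_B_area
    (A B C D : EuclideanSpace ℝ (Fin 2))
    (hC : ∠ A C B = Real.pi / 2)
    (ha : 0 < dist B C) (hb : 0 < dist A C)
    (hD : D = midpoint ℝ A B)
    (θ : ℝ) (hθ : θ = ∠ B A C) :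
    volume {x : EuclideanSpace ℝ (Fin 2) |
        dist x D ≤ dist A B / 2 ∧ (affineSpan ℝ {B, C}).SOppSide x A}
      = ENNReal.ofReal ((dist A B) ^ 2 * θ / 4 - dist B C * dist A C / 4) := by
  -- basic triangle facts
  have hPyth : dist A B * dist A B = dist A C * dist A C + dist B C * dist B C :=
    (dist_sq_eq_dist_sq_add_dist_sq_iff_angle_eq_pi_div_two A C B).2 hC
  have hc : 0 < dist A B := by nlinarith [dist_nonneg (x := A) (y := B)]
  have hbc : dist A C < dist A B := by nlinarith
  have hinner0 : (inner ℝ (A - C) (B - C) : ℝ) = 0 := by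
    have h := (InnerProductGeometry.inner_eq_zero_iff_angle_eq_pi_div_two
      (A -ᵥ C) (B -ᵥ C)).2 hC
    simpa [vsub_eq_sub] using h
  have hinner0' : (inner ℝ (C - A) (C - B) : ℝ) = 0 := by
    rw [← neg_sub A C, ← neg_sub B C, inner_neg_neg]
    exact hinner0
  have hθv : θ = Real.arccos (dist A C / dist A B) := by
    have h := EuclideanGeometry.angle_eq_arccos_of_angle_eq_pi_div_two
      (p₁ := B) (p₂ := C) (p₃ := A) (by rwa [EuclideanGeometry.angle_comm] at hC)
    rw [hθ, EuclideanGeometry.angle_comm, h, dist_comm B A]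
  -- the orthonormal frame
  set v : E2 := (dist A C)⁻¹ • (C - A) with hv
  set u : E2 := (dist B C)⁻¹ • (C - B) with hu
  have hnCA : ‖C - A‖ = dist A C := by rw [← dist_eq_norm, dist_comm]
  have hnCB : ‖C - B‖ = dist B C := by rw [← dist_eq_norm, dist_comm]
  have hnv : ‖v‖ = 1 := by
    rw [hv, norm_smul, Real.norm_eq_abs, abs_inv, abs_of_pos hb, hnCA,
      inv_mul_cancel₀ hb.ne']
  have hnu : ‖u‖ = 1 := by
    rw [hu, norm_smul, Real.norm_eq_abs, abs_inv, abs_of_pos ha, hnCB,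
      inv_mul_cancel₀ ha.ne']
  have hvu : (inner ℝ v u : ℝ) = 0 := by
    rw [hv, hu, real_inner_smul_left, real_inner_smul_right, hinner0']
    ring
  have hON : Orthonormal ℝ ![v, u] := by
    rw [orthonormal_iff_ite]
    intro i j
    fin_cases i <;> fin_cases j <;>
      simp only [Matrix.cons_val_zero, Matrix.cons_val_one, Matrix.head_cons,
        Fin.zero_eta, Fin.mk_one, Fin.isValue, reduceIte, ite_true, ite_false,
        one_ne_zero, zero_ne_one, Fin.one_eq_zero_iff, Fin.zero_eq_one_iff,
        Nat.succ_ne_self, OfNat.ofNat_ne_one, ne_eq]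
    · rw [real_inner_self_eq_norm_sq, hnv]; norm_num
    · exact hvu
    · rw [real_inner_comm]; exact hvu
    · rw [real_inner_self_eq_norm_sq, hnu]; norm_num
  have hspan : ⊤ ≤ Submodule.span ℝ (Set.range ![v, u]) := by
    rw [hON.linearIndependent.span_eq_top_of_card_eq_finrank
      (by simp [finrank_euclideanSpace_fin])]
  set b2 : OrthonormalBasis (Fin 2) ℝ E2 := OrthonormalBasis.mk hON hspan with hb2
  have hb2v : b2 0 = v := by rw [hb2, OrthonormalBasis.coe_mk]; rfl
  have hb2u : b2 1 = u := by rw [hb2, OrthonormalBasis.coe_mk]; rfl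
  -- level-set description of the line BC
  set k : ℝ := inner ℝ v B with hk
  have hvCB : (inner ℝ v (C - B) : ℝ) = 0 := by
    rw [hv, real_inner_smul_left, hinner0']; ring
  have hLev : ∀ y, y ∈ affineSpan ℝ ({B, C} : Set E2) ↔ (inner ℝ v y : ℝ) = k := by
    intro y
    constructor
    · intro hy
      have h1 : (y -ᵥ B) +ᵥ B ∈ affineSpan ℝ ({B, C} : Set E2) := by rwa [vsub_vadd]
      obtain ⟨r, hr⟩ := vadd_left_mem_affineSpan_pair.1 h1
      have h2 : (inner ℝ v (y - B) : ℝ) = 0 := by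
        have : y - B = r • (C - B) := by
          rw [← vsub_eq_sub, ← vsub_eq_sub, ← hr]
        rw [this, real_inner_smul_right, hvCB, mul_zero]
      rw [inner_sub_right] at h2
      rw [hk]; linarith
    · intro hy
      have h2 : (inner ℝ v (y - B) : ℝ) = 0 := by
        rw [inner_sub_right, hy, hk]; ring
      have hexp : y - B = (inner ℝ u (y - B) : ℝ) • u := by
        have hs := b2.sum_repr (y - B)
        rw [Fin.sum_univ_two] at hs
        rw [b2.repr_apply_apply, b2.repr_apply_apply, hb2v, hb2u, h2, zero_smul,
          zero_add] at hs
        exact hs.symm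
      have : y = (((inner ℝ u (y - B) : ℝ)) * (dist B C)⁻¹) • (C -ᵥ B) +ᵥ B := by
        have : ((inner ℝ u (y - B) : ℝ)) • u = (((inner ℝ u (y - B) : ℝ)) * (dist B C)⁻¹) • (C - B) := by
          rw [hu, smul_smul]
        simp only [vsub_eq_sub, vadd_eq_add]
        rw [← this, ← hexp]
        abel
      rw [this]
      exact smul_vsub_vadd_mem_affineSpan_pair _ _ _
  -- inner products with A, B, D
  have hBA : (inner ℝ (C - A) (B - A) : ℝ) = dist A C ^ 2 := by
    have hsplit : B - A = (B - C) + (C - A) := by abel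
    rw [hsplit, inner_add_right]
    have h1 : (inner ℝ (C - A) (B - C) : ℝ) = 0 := by
      rw [← neg_sub C B, inner_neg_right, hinner0']; ring
    rw [h1, real_inner_self_eq_norm_sq, hnCA]
    ring
  have hvBA : (inner ℝ v (B - A) : ℝ) = dist A C := by
    rw [hv, real_inner_smul_left, hBA]
    field_simp
  have hAk : (inner ℝ v A : ℝ) < k := by
    have h1 : k - inner ℝ v A = inner ℝ v (B - A) := by
      rw [inner_sub_right, hk]
    nlinarith [hvBA, h1]
  have hSide : ∀ x : E2, (affineSpan ℝ ({B, C} : Set E2)).SOppSide x A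
      ↔ k < (inner ℝ v x : ℝ) :=
    fun x => side_aux _ v k A hLev hAk x
  -- distance from the chord to the center
  have hBD : B - D = (2:ℝ)⁻¹ • (B - A) := by
    have h := right_vsub_midpoint (R := ℝ) A B
    rw [← hD] at h
    simpa [vsub_eq_sub, invOf_eq_inv (2:ℝ)] using h
  have hdval : k - (inner ℝ v D : ℝ) = dist A C / 2 := by
    have h1 : k - (inner ℝ v D : ℝ) = inner ℝ v (B - D) := by
      rw [inner_sub_right, hk]
    rw [h1, hBD, real_inner_smul_right, hvBA]
    ring
  -- the measure-preserving coordinate map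
  set φ : E2 → ℝ × ℝ := fun x =>
    MeasurableEquiv.finTwoArrow ((MeasurableEquiv.toLp 2 (Fin 2 → ℝ)).symm (b2.repr (x - D)))
    with hφ
  have hφmp : MeasurePreserving φ volume volume := by
    have h1 : MeasurePreserving (fun x : E2 => x - D) volume volume :=
      measurePreserving_sub_right volume D
    have h2 := b2.measurePreserving_repr
    have h3 := EuclideanSpace.volume_preserving_symm_measurableEquiv_toLp (Fin 2)
    have h4 := measurePreserving_finTwoArrow (volume : Measure ℝ)
    rw [← MeasureTheory.volume_pi, ← MeasureTheory.Measure.volume_eq_prod] at h4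
    exact h4.comp (h3.comp (h2.comp h1))
  have hφ1 : ∀ x : E2, (φ x).1 = (inner ℝ v (x - D) : ℝ) := by
    intro x
    rw [hφ]
    simp only [MeasurableEquiv.finTwoArrow_apply, MeasurableEquiv.toLp_symm_apply]
    rw [b2.repr_apply_apply, hb2v]
  have hφ2 : ∀ x : E2, (φ x).2 = (inner ℝ u (x - D) : ℝ) := by
    intro x
    rw [hφ]
    simp only [MeasurableEquiv.finTwoArrow_apply, MeasurableEquiv.toLp_symm_apply]
    rw [b2.repr_apply_apply, hb2u]
  have hnorm : ∀ x : E2, (inner ℝ v (x - D) : ℝ)^2 + (inner ℝ u (x - D) : ℝ)^2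
      = dist x D ^ 2 := by
    intro x
    have h1 : dist x D = ‖b2.repr (x - D)‖ := by
      rw [dist_eq_norm, b2.repr.norm_map]
    rw [h1, EuclideanSpace.norm_eq, Real.sq_sqrt (by positivity), Fin.sum_univ_two,
      Real.norm_eq_abs, Real.norm_eq_abs, sq_abs, sq_abs,
      b2.repr_apply_apply, b2.repr_apply_apply, hb2v, hb2u]
  -- identify the region with the preimage of the planar segment
  set S' : Set (ℝ × ℝ) :=
    {p : ℝ × ℝ | p.1^2 + p.2^2 ≤ (dist A B / 2)^2 ∧ dist A C / 2 < p.1} with hS'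
  have hSeq : {x : E2 | dist x D ≤ dist A B / 2 ∧ (affineSpan ℝ {B, C}).SOppSide x A}
      = φ ⁻¹' S' := by
    ext x
    simp only [Set.mem_setOf_eq, Set.mem_preimage, hS', hφ1 x, hφ2 x, hnorm x]
    constructor
    · rintro ⟨h1, h2⟩
      refine ⟨?_, ?_⟩
      · exact pow_le_pow_left₀ dist_nonneg h1 2
      · have := (hSide x).1 h2
        have h3 : (inner ℝ v (x - D) : ℝ) = inner ℝ v x - inner ℝ v D := by
          rw [inner_sub_right]
        rw [h3]
        linarith [hdval]
    · rintro ⟨h1, h2⟩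
      refine ⟨?_, ?_⟩
      · have := (pow_le_pow_iff_left₀ dist_nonneg (by positivity) two_ne_zero).1 h1
        exact this
      · apply (hSide x).2
        have h3 : (inner ℝ v (x - D) : ℝ) = inner ℝ v x - inner ℝ v D := by
          rw [inner_sub_right]
        rw [h3] at h2
        linarith [hdval]
  -- put everything together
  have hd0 : (0:ℝ) ≤ dist A C / 2 := by positivity
  have hdr : dist A C / 2 ≤ dist A B / 2 := by linarith
  have hr0 : (0:ℝ) < dist A B / 2 := by linarith
  have hmeasS' : MeasurableSet S' := by
    apply MeasurableSet.inter
    · exact measurableSet_le ((measurable_fst.pow_const 2).add (measurable_snd.pow_const 2))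
        measurable_const
    · exact measurableSet_lt measurable_const measurable_fst
  rw [hSeq, hφmp.measure_preimage hmeasS'.nullMeasurableSet]
  rw [hS', volume_halfdisk hr0 hd0 hdr, seg_integral hr0 hd0 hdr]
  congr 1
  have hsqrt : Real.sqrt ((dist A B / 2)^2 - (dist A C / 2)^2) = dist B C / 2 := by
    rw [show (dist A B / 2)^2 - (dist A C / 2)^2 = (dist B C / 2)^2 by nlinarith]
    exact Real.sqrt_sq (by positivity)
  have hquot : dist A C / 2 / (dist A B / 2) = dist A C / dist A B := by
    field_simp
  rw [hsqrt, hquot]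
  have harc : π/2 - Real.arcsin (dist A C / dist A B) = θ := by
    rw [hθv, Real.arccos_eq_pi_div_two_sub_arcsin]
  rw [harc]
  ring
end

section
/- (Region E) Let F be the midpoint of segment BC, G the orthogonal projection of C onto line AB, and θ = ∠ B A C. The circular segment of the circle with center F and radius a/2 cut off by the chord CG, on the side of line CG opposite to B — that is, the set of points x with dist x F ≤ a/2 lying on the opposite side of the line through C and G from B — has two-dimensional Lebesgue measure a^2·(π − 2θ)/8 − a^3·b/(4·c^2). -/
open EuclideanGeometry MeasureTheory RealInnerProductSpace Real Set

noncomputable section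
local notation "E2" => EuclideanSpace ℝ (Fin 2)

lemma mem_line_iff (n p q : E2) (hn : n ≠ 0) (hpq : q - p ≠ 0) (hq : ⟪n, q - p⟫ = 0)
    (x : E2) : x ∈ line[ℝ, p, q] ↔ ⟪n, x - p⟫ = 0 := by
  have horth : (ℝ ∙ n)ᗮ = ℝ ∙ (q - p) := by
    symm
    apply Submodule.eq_of_le_of_finrank_eq
    · rw [Submodule.span_le, Set.singleton_subset_iff]
      exact Submodule.mem_orthogonal_singleton_iff_inner_right.2 hq
    · rw [finrank_span_singleton hpq]
      have := Submodule.finrank_add_finrank_orthogonal (𝕜 := ℝ) (ℝ ∙ n)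
      rw [finrank_span_singleton hn, finrank_euclideanSpace_fin] at this
      omega
  constructor
  · intro hx
    have : x - p ∈ ℝ ∙ (q - p) := by
      have hx' : x ∈ line[ℝ, p, q] := hx
      obtain ⟨r, hr⟩ := vadd_left_mem_affineSpan_pair.1 (by
        show (x - p) +ᵥ p ∈ line[ℝ, p, q]
        simpa using hx')
      exact Submodule.mem_span_singleton.2 ⟨r, hr⟩
    rw [← horth, Submodule.mem_orthogonal_singleton_iff_inner_right] at this
    exact this
  · intro hx
    have : x - p ∈ ℝ ∙ (q - p) := by
      rw [← horth]
      exact Submodule.mem_orthogonal_singleton_iff_inner_right.2 hx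
    obtain ⟨r, hr⟩ := Submodule.mem_span_singleton.1 this
    have : (x - p) +ᵥ p ∈ line[ℝ, p, q] := vadd_left_mem_affineSpan_pair.2 ⟨r, hr⟩
    simpa using this

lemma sOppSide_iff_inner (n p q B : E2) (hn : n ≠ 0) (hpq : q - p ≠ 0)
    (hq : ⟪n, q - p⟫ = 0) (hB : ⟪n, B - p⟫ < 0) (x : E2) :
    (line[ℝ, p, q]).SOppSide x B ↔ 0 < ⟪n, x - p⟫ := by
  constructor
  · intro h
    rw [AffineSubspace.sOppSide_iff_exists_left (left_mem_affineSpan_pair ℝ p q)] at h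
    obtain ⟨hx, hBn, p₂, hp₂, hray⟩ := h
    have hxne : ⟪n, x - p⟫ ≠ 0 := fun hz => hx ((mem_line_iff n p q hn hpq hq x).2 hz)
    have hp₂0 : ⟪n, p₂ - p⟫ = 0 := (mem_line_iff n p q hn hpq hq p₂).1 hp₂
    have hray' := hray.map (innerSL ℝ n).toLinearMap
    simp only [vsub_eq_sub] at hray'
    have hray'' : SameRay ℝ (⟪n, x - p⟫) (⟪n, p₂ - B⟫) := hray'
    have hpb : ⟪n, p₂ - B⟫ > 0 := by
      have : p₂ - B = (p₂ - p) - (B - p) := by abel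
      rw [this, inner_sub_right, hp₂0]
      linarith
    obtain ⟨r, s, hr, hs, hrs⟩ := hray''.exists_pos hxne (ne_of_gt hpb)
    simp only [smul_eq_mul] at hrs
    nlinarith [mul_pos hs hpb]
  · intro hx
    have hxB : x ≠ B := by
      intro hxe; rw [hxe] at hx; linarith
    set t : ℝ := ⟪n, x - p⟫ / (⟪n, x - p⟫ - ⟪n, B - p⟫) with ht
    have hden : 0 < ⟪n, x - p⟫ - ⟪n, B - p⟫ := by linarith
    have ht0 : 0 < t := div_pos hx hden
    have ht1 : t < 1 := by
      rw [div_lt_one hden]; linarith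
    have hsb : Sbtw ℝ x (AffineMap.lineMap x B t) B :=
      sbtw_lineMap_iff.2 ⟨hxB, ht0, ht1⟩
    have hmem : AffineMap.lineMap x B t ∈ line[ℝ, p, q] := by
      rw [mem_line_iff n p q hn hpq hq]
      have expand : ⟪n, (AffineMap.lineMap x B t : E2) - p⟫
          = ⟪n, x - p⟫ + t * (⟪n, B - p⟫ - ⟪n, x - p⟫) := by
        have hrw : (AffineMap.lineMap x B t : E2) - p = (x - p) + t • ((B - p) - (x - p)) := by
          rw [AffineMap.lineMap_apply]
          simp only [vsub_eq_sub, vadd_eq_add, smul_sub]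
          abel
        rw [hrw]
        simp only [inner_add_right, inner_smul_right, inner_sub_right]
      rw [expand]
      have key : ∀ gx gB : ℝ, 0 < gx - gB → gx + gx / (gx - gB) * (gB - gx) = 0 := by
        intro gx gB h
        field_simp
        ring
      exact key _ _ hden
    have hxnot : x ∉ line[ℝ, p, q] := by
      intro hmm
      rw [mem_line_iff n p q hn hpq hq] at hmm
      linarith
    exact hsb.sOppSide_of_notMem_of_mem hxnot hmem

-- step 5 : the integral
lemma integral_step (r d : ℝ) (hd : 0 ≤ d) (hdr : d < r) :
    ∫ x in d..r, 2 * Real.sqrt (r ^ 2 - x ^ 2)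
      = r ^ 2 * (π / 2 - Real.arcsin (d / r)) - d * Real.sqrt (r ^ 2 - d ^ 2) := by
  have hr : 0 < r := lt_of_le_of_lt hd hdr
  have hdr1 : d / r ≤ 1 := (div_le_one hr).2 hdr.le
  have hdr0 : 0 ≤ d / r := div_nonneg hd hr.le
  set a₀ := Real.arcsin (d / r) with ha₀
  have ha₀0 : 0 ≤ a₀ := Real.arcsin_nonneg.2 hdr0
  have ha₀le : a₀ ≤ π / 2 := Real.arcsin_le_pi_div_two _
  have hsin : Real.sin a₀ = d / r := Real.sin_arcsin (by linarith) hdr1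
  have hsub : ∫ t in a₀..(π/2), (r * Real.cos t) • ((fun x => 2 * Real.sqrt (r ^ 2 - x ^ 2)) ∘ (fun t => r * Real.sin t)) t
      = ∫ x in (r * Real.sin a₀)..(r * Real.sin (π/2)), 2 * Real.sqrt (r ^ 2 - x ^ 2) := by
    apply intervalIntegral.integral_comp_smul_deriv
    · intro t _
      simpa using ((Real.hasDerivAt_sin t).const_mul r)
    · exact (continuous_const.mul Real.continuous_cos).continuousOn
    · exact continuous_const.mul (Real.continuous_sqrt.comp
        (by continuity))
  rw [hsin, Real.sin_pi_div_two, mul_one] at hsub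
  rw [mul_div_cancel₀ _ (ne_of_gt hr)] at hsub
  rw [← hsub]
  have hcong : ∀ t ∈ Set.uIcc a₀ (π/2),
      (r * Real.cos t) • ((fun x => 2 * Real.sqrt (r ^ 2 - x ^ 2)) ∘ (fun t => r * Real.sin t)) t
        = 2 * r ^ 2 * Real.cos t ^ 2 := by
    intro t ht
    rw [Set.uIcc_of_le (by linarith)] at ht
    have hcos : 0 ≤ Real.cos t := Real.cos_nonneg_of_mem_Icc ⟨by linarith [ht.1], ht.2⟩
    have : r ^ 2 - (r * Real.sin t) ^ 2 = (r * Real.cos t) ^ 2 := by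
      have := Real.sin_sq_add_cos_sq t
      ring_nf
      nlinarith
    simp only [Function.comp_apply, smul_eq_mul, this]
    rw [Real.sqrt_sq (by positivity)]
    ring
  rw [intervalIntegral.integral_congr hcong]
  have : ∫ t in a₀..(π/2), 2 * r ^ 2 * Real.cos t ^ 2
      = 2 * r ^ 2 * ∫ t in a₀..(π/2), Real.cos t ^ 2 := by
    rw [← intervalIntegral.integral_const_mul]
  rw [this, integral_cos_sq, Real.cos_pi_div_two, Real.sin_pi_div_two, hsin]
  have hcosa : Real.cos a₀ = Real.sqrt (1 - (d / r) ^ 2) := Real.cos_arcsin _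
  rw [hcosa]
  have h1 : (0:ℝ) ≤ 1 - (d / r) ^ 2 := by nlinarith
  have hs : Real.sqrt (1 - (d / r) ^ 2) * r = Real.sqrt (r ^ 2 - d ^ 2) := by
    have h2 : Real.sqrt (1 - (d / r) ^ 2) * r = Real.sqrt ((1 - (d / r) ^ 2) * r ^ 2) := by
      rw [Real.sqrt_mul h1, Real.sqrt_sq hr.le]
    rw [h2]
    congr 1
    field_simp
  rw [← hs]
  generalize Real.sqrt (1 - (d / r) ^ 2) = s
  field_simp
  ring

-- the planar set in ℝ × ℝ
lemma volume_R2 (r d : ℝ) (hd : 0 ≤ d) (hdr : d < r) :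
    volume {p : ℝ × ℝ | p.1 ^ 2 + p.2 ^ 2 ≤ r ^ 2 ∧ d < p.1}
      = ENNReal.ofReal (∫ x in d..r, 2 * Real.sqrt (r ^ 2 - x ^ 2)) := by
  have hr : 0 < r := lt_of_le_of_lt hd hdr
  set S : Set (ℝ × ℝ) := {p : ℝ × ℝ | p.1 ^ 2 + p.2 ^ 2 ≤ r ^ 2 ∧ d < p.1} with hS
  have hmeas : MeasurableSet S := by
    have hSeq : S = {p : ℝ × ℝ | p.1 ^ 2 + p.2 ^ 2 ≤ r ^ 2} ∩ {p : ℝ × ℝ | d < p.1} := by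
      ext p; simp [hS, Set.mem_setOf_eq]
    rw [hSeq]
    exact (measurableSet_le (by fun_prop) measurable_const).inter
      (measurableSet_lt measurable_const (by fun_prop))
  rw [MeasureTheory.Measure.volume_eq_prod, Measure.prod_apply hmeas]
  have hslice : ∀ x : ℝ, volume (Prod.mk x ⁻¹' S)
      = Set.indicator (Set.Ioc d r) (fun x => ENNReal.ofReal (2 * Real.sqrt (r ^ 2 - x ^ 2))) x := by
    intro x
    by_cases hx : x ∈ Set.Ioc d r
    · have hxr : x ^ 2 ≤ r ^ 2 := by nlinarith [hx.1, hx.2]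
      have h0 : (0:ℝ) ≤ r ^ 2 - x ^ 2 := by linarith
      have : Prod.mk x ⁻¹' S = Set.Icc (-Real.sqrt (r ^ 2 - x ^ 2)) (Real.sqrt (r ^ 2 - x ^ 2)) := by
        ext y
        simp only [Set.mem_preimage, hS, Set.mem_setOf_eq, Set.mem_Icc]
        constructor
        · rintro ⟨h1, _⟩
          have : y ^ 2 ≤ r ^ 2 - x ^ 2 := by linarith
          have habs : |y| ≤ Real.sqrt (r ^ 2 - x ^ 2) := by
            rw [← Real.sqrt_sq_eq_abs]
            exact Real.sqrt_le_sqrt this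
          exact abs_le.1 habs
        · rintro ⟨h1, h2⟩
          have habs : |y| ≤ Real.sqrt (r ^ 2 - x ^ 2) := abs_le.2 ⟨h1, h2⟩
          have : y ^ 2 ≤ r ^ 2 - x ^ 2 := by
            have := Real.sq_sqrt h0
            nlinarith [abs_nonneg y, sq_abs y]
          exact ⟨by linarith, hx.1⟩
      rw [this, Real.volume_Icc, Set.indicator_of_mem hx]
      congr 1
      ring
    · have : Prod.mk x ⁻¹' S = ∅ := by
        ext y
        simp only [Set.mem_preimage, hS, Set.mem_setOf_eq, Set.mem_empty_iff_false, iff_false]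
        rintro ⟨h1, h2⟩
        apply hx
        refine ⟨h2, ?_⟩
        nlinarith
      rw [this, Set.indicator_of_notMem hx]
      simp
  simp_rw [hslice]
  rw [lintegral_indicator measurableSet_Ioc]
  rw [← ofReal_integral_eq_lintegral_ofReal]
  · rw [intervalIntegral.integral_of_le hdr.le]
  · apply Continuous.integrableOn_Ioc
    fun_prop
  · filter_upwards with x
    positivity

lemma halfdisc_area (v F : E2) (hv : ‖v‖ = 1) (r d : ℝ) (hd : 0 ≤ d) (hdr : d < r) :
    volume {x : E2 | dist x F ≤ r ∧ d < ⟪v, x - F⟫}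
      = ENNReal.ofReal (∫ x in d..r, 2 * Real.sqrt (r ^ 2 - x ^ 2)) := by
  have hr : 0 < r := lt_of_le_of_lt hd hdr
  set e₀ : E2 := EuclideanSpace.single (0 : Fin 2) (1 : ℝ) with he₀
  have he₀n : ‖e₀‖ = 1 := by
    simp [he₀, EuclideanSpace.norm_single]
  set e : E2 ≃ₗᵢ[ℝ] E2 := Submodule.reflection (Submodule.span ℝ {v - e₀})ᗮ with he
  have hev : e v = e₀ := Submodule.reflection_sub (by rw [hv, he₀n])
  have hScont : Continuous fun x : E2 => (⟪v, x - F⟫ : ℝ) :=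
    continuous_const.inner (continuous_id.sub continuous_const)
  have hmeas : MeasurableSet {x : E2 | dist x F ≤ r ∧ d < ⟪v, x - F⟫} := by
    have : {x : E2 | dist x F ≤ r ∧ d < ⟪v, x - F⟫}
        = Metric.closedBall F r ∩ {x : E2 | d < ⟪v, x - F⟫} := by
      ext x; simp [Metric.mem_closedBall]
    rw [this]
    exact measurableSet_closedBall.inter (isOpen_lt continuous_const hScont).measurableSet
  set g : E2 → E2 := fun y => e.symm y + F with hg
  set T₁ : (Fin 2 → ℝ) → E2 := ⇑(MeasurableEquiv.toLp 2 (Fin 2 → ℝ)) with hT₁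
  set T₂ : ℝ × ℝ → Fin 2 → ℝ := ⇑(MeasurableEquiv.finTwoArrow (α := ℝ)).symm with hT₂
  have hgp : MeasurePreserving g volume volume :=
    (measurePreserving_add_right volume F).comp e.symm.measurePreserving
  have hT₁p : MeasurePreserving T₁ volume volume :=
    (EuclideanSpace.volume_preserving_symm_measurableEquiv_toLp (Fin 2)).symm
  have hT₂p : MeasurePreserving T₂ volume volume :=
    (MeasureTheory.volume_preserving_finTwoArrow ℝ).symm
  have hmp : MeasurePreserving ((g ∘ T₁) ∘ T₂) volume volume :=
    (hgp.comp hT₁p).comp hT₂p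
  rw [← hmp.measure_preimage hmeas.nullMeasurableSet]
  have hpre : ((g ∘ T₁) ∘ T₂) ⁻¹' {x : E2 | dist x F ≤ r ∧ d < ⟪v, x - F⟫}
      = {p : ℝ × ℝ | p.1 ^ 2 + p.2 ^ 2 ≤ r ^ 2 ∧ d < p.1} := by
    ext p
    set w : E2 := T₁ (T₂ p) with hw
    have hw0 : w 0 = p.1 := rfl
    have hw1 : w 1 = p.2 := rfl
    have hdist : dist (g w) F = ‖w‖ := by
      rw [hg]
      simp only []
      rw [dist_eq_norm, add_sub_cancel_right, e.symm.norm_map]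
    have hinner : (⟪v, g w - F⟫ : ℝ) = p.1 := by
      have h1 : g w - F = e.symm w := by rw [hg]; simp
      rw [h1, ← e.inner_map_map v (e.symm w), e.apply_symm_apply, hev, he₀,
        EuclideanSpace.inner_single_left]
      simp [hw0]
    have hnorm : ‖w‖ ≤ r ↔ p.1 ^ 2 + p.2 ^ 2 ≤ r ^ 2 := by
      rw [EuclideanSpace.norm_eq, Real.sqrt_le_left hr.le]
      rw [Fin.sum_univ_two, hw0, hw1]
      simp [Real.norm_eq_abs, sq_abs]
    simp only [Set.mem_preimage, Function.comp_apply, Set.mem_setOf_eq, ← hw, hdist, hinner,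
      hnorm]
  rw [hpre, volume_R2 r d hd hdr]

private lemma sc_alt (a b c : ℝ) (ha : 0 < a) (hb : 0 < b) (hc : 0 ≤ c)
    (h : c ^ 2 = a ^ 2 + b ^ 2) : a < c := by nlinarith

private lemma sc_dr (a c : ℝ) (ha : 0 < a) (hac : a < c) : a ^ 2 / (2 * c) < a / 2 := by
  rw [div_lt_div_iff₀ (by linarith) (by norm_num)]
  nlinarith

private lemma sc_cf (t c a : ℝ) (ht : t < 1) (hc : 0 < c) :
    -(2⁻¹ : ℝ) * (((1 - t) * c)⁻¹ * ((t - 1) * a ^ 2)) = a ^ 2 / (2 * c) := by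
  have h1 : (1 - t) ≠ 0 := by linarith
  have h2 : c ≠ 0 := ne_of_gt hc
  field_simp
  ring

private lemma sc_cos (b c : ℝ) (hb : b ≠ 0) : -(-b ^ 2) / (c * b) = b / c := by
  rw [neg_neg, pow_two, mul_comm c b, mul_div_mul_left _ _ hb]

private lemma sc_sin (a b c : ℝ) (hc : c ≠ 0) (h : c ^ 2 = a ^ 2 + b ^ 2) :
    1 - (b / c) ^ 2 = (a / c) ^ 2 := by
  field_simp
  linarith

private lemma sc_ratio (a c : ℝ) (ha : a ≠ 0) (hc : c ≠ 0) :
    a ^ 2 / (2 * c) / (a / 2) = a / c := by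
  field_simp

private lemma sc_sq (a b c : ℝ) (hc : c ≠ 0) (h : c ^ 2 = a ^ 2 + b ^ 2) :
    (a / 2) ^ 2 - (a ^ 2 / (2 * c)) ^ 2 = (a * b / (2 * c)) ^ 2 := by
  field_simp
  linear_combination a ^ 2 * h

private lemma sc_fin (a b c θ : ℝ) (hc : c ≠ 0) :
    (a / 2) ^ 2 * (Real.pi / 2 - θ) - a ^ 2 / (2 * c) * (a * b / (2 * c))
      = a ^ 2 * (Real.pi - 2 * θ) / 8 - a ^ 3 * b / (4 * c ^ 2) := by
  field_simp
  ring

theorem region_E_area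
    (A B C G F : EuclideanSpace ℝ (Fin 2))
    (hC : ∠ A C B = Real.pi / 2)
    (ha : 0 < dist B C) (hb : 0 < dist A C)
    (hG : G = EuclideanGeometry.orthogonalProjection (affineSpan ℝ {A, B}) C)
    (hF : F = midpoint ℝ B C)
    (θ : ℝ) (hθ : θ = ∠ B A C) :
    volume {x : EuclideanSpace ℝ (Fin 2) |
        dist x F ≤ dist B C / 2 ∧ (affineSpan ℝ {C, G}).SOppSide x B}
      = ENNReal.ofReal ((dist B C) ^ 2 * (Real.pi - 2 * θ) / 8
          - (dist B C) ^ 3 * dist A C / (4 * (dist A B) ^ 2)) := by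
  obtain ⟨P, hP⟩ : ∃ P : E2, P = A - C := ⟨_, rfl⟩
  obtain ⟨Q, hQ⟩ : ∃ Q : E2, Q = B - C := ⟨_, rfl⟩
  obtain ⟨u, hu⟩ : ∃ u : E2, u = Q - P := ⟨_, rfl⟩
  obtain ⟨a, ha_def⟩ : ∃ x : ℝ, x = dist B C := ⟨_, rfl⟩
  obtain ⟨b, hb_def⟩ : ∃ x : ℝ, x = dist A C := ⟨_, rfl⟩
  obtain ⟨c, hc_def⟩ : ∃ x : ℝ, x = dist A B := ⟨_, rfl⟩
  rw [← ha_def, ← hb_def, ← hc_def]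
  rw [← ha_def] at ha
  rw [← hb_def] at hb
  have hna : ‖Q‖ = a := by rw [hQ, ha_def, dist_eq_norm]
  have hnb : ‖P‖ = b := by rw [hP, hb_def, dist_eq_norm]
  have hBA : B - A = u := by rw [hu, hQ, hP]; abel
  have hnc : ‖u‖ = c := by rw [← hBA, hc_def, dist_eq_norm']
  -- right angle at C
  have hip : ⟪P, Q⟫ = 0 := by
    rw [show (∠ A C B) = InnerProductGeometry.angle (A - C) (B - C) from rfl] at hC
    rw [hP, hQ]
    exact (InnerProductGeometry.inner_eq_zero_iff_angle_eq_pi_div_two _ _).2 hC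
  clear hC
  have hip' : ⟪Q, P⟫ = 0 := by rw [real_inner_comm]; exact hip
  -- basic inner products
  have iPP : ⟪P, P⟫ = b ^ 2 := by rw [real_inner_self_eq_norm_sq, hnb]
  have iQQ : ⟪Q, Q⟫ = a ^ 2 := by rw [real_inner_self_eq_norm_sq, hna]
  have iuu : ⟪u, u⟫ = c ^ 2 := by rw [real_inner_self_eq_norm_sq, hnc]
  have iuP : ⟪u, P⟫ = -b ^ 2 := by rw [hu, inner_sub_left, iPP, hip']; ring
  have iuQ : ⟪u, Q⟫ = a ^ 2 := by rw [hu, inner_sub_left, iQQ, hip]; ring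
  have hc2 : c ^ 2 = a ^ 2 + b ^ 2 := by
    rw [← iuu, hu]
    simp only [inner_sub_left, inner_sub_right]
    rw [iPP, iQQ, hip, hip']
    ring
  have ha2 : 0 < a ^ 2 := pow_pos ha 2
  have hb2 : 0 < b ^ 2 := pow_pos hb 2
  have hcnn : 0 ≤ c := by rw [hc_def]; exact dist_nonneg
  have hcne : c ≠ 0 := by
    intro h
    rw [h] at hc2
    norm_num at hc2
    linarith
  have hc' : 0 < c := hcnn.lt_of_ne (Ne.symm hcne)
  -- the projection G
  have hGperp : ⟪u, G - C⟫ = 0 := by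
    have h1 := EuclideanGeometry.orthogonalProjection_vsub_mem_direction_orthogonal
      (affineSpan ℝ {A, B}) C
    rw [← hG] at h1
    have h2 : (B : E2) -ᵥ A ∈ (affineSpan ℝ {A, B}).direction :=
      AffineSubspace.vsub_mem_direction (right_mem_affineSpan_pair ℝ A B)
        (left_mem_affineSpan_pair ℝ A B)
    have h3 := (Submodule.mem_orthogonal _ _).1 h1 _ h2
    rw [← hBA]
    simpa [vsub_eq_sub] using h3
  obtain ⟨t, ht⟩ : ∃ t : ℝ, t • u = G - A := by
    have hGmem : G ∈ affineSpan ℝ {A, B} := by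
      rw [hG]; exact EuclideanGeometry.orthogonalProjection_mem C
    have := vadd_left_mem_affineSpan_pair.1
      (show (G - A) +ᵥ A ∈ line[ℝ, A, B] by simpa using hGmem)
    obtain ⟨r, hr⟩ := this
    exact ⟨r, by rw [← hBA]; simpa [vsub_eq_sub] using hr⟩
  clear hG
  have hGC : G - C = t • u + P := by rw [ht, hP]; abel
  have hGB : G - B = t • u - u := by rw [ht, ← hBA]; abel
  -- value of t
  have htval : t = b ^ 2 / c ^ 2 := by
    have hcc0 : (c:ℝ) ^ 2 ≠ 0 := by positivity
    rw [hGC, inner_add_right, inner_smul_right, iuu, iuP] at hGperp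
    rw [eq_div_iff hcc0]
    linarith
  have ht1 : t < 1 := by
    rw [htval, div_lt_one (pow_pos hc' 2)]
    linarith
  obtain ⟨n, hn⟩ : ∃ n : E2, n = (t - 1) • u := ⟨_, rfl⟩
  have hnGB : G - B = n := by rw [hn, hGB, sub_smul, one_smul]
  have hnu : ‖n‖ = (1 - t) * c := by
    rw [hn, norm_smul, Real.norm_eq_abs, abs_of_neg (by linarith), hnc]; ring
  have hnpos : 0 < ‖n‖ := by rw [hnu]; exact mul_pos (by linarith) hc'
  have hnne : n ≠ 0 := by intro h; rw [h, norm_zero] at hnpos; exact lt_irrefl _ hnpos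
  have hcc : (c:ℝ) ^ 2 ≠ 0 := by positivity
  have inGC : ⟪n, G - C⟫ = 0 := by
    rw [hn, hGC]
    simp only [inner_add_right, inner_smul_left, inner_smul_right]
    rw [iuu, iuP, htval]
    field_simp
    ring
  have inBC : ⟪n, B - C⟫ = (t - 1) * a ^ 2 := by
    rw [hn, ← hQ, inner_smul_left, iuQ]; norm_num
  have inBCneg : ⟪n, B - C⟫ < 0 := by
    rw [inBC]; exact mul_neg_of_neg_of_pos (by linarith) ha2
  have iPGC : ⟪P, G - C⟫ = (1 - t) * b ^ 2 := by
    rw [hGC, inner_add_right, real_inner_smul_right, real_inner_comm u P, iuP, iPP]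
    ring
  have hGCne : G - C ≠ 0 := by
    intro h
    rw [h, inner_zero_right] at iPGC
    have : 0 < (1 - t) * b ^ 2 := mul_pos (by linarith) hb2
    linarith
  -- unit normal
  obtain ⟨v, hv_def⟩ : ∃ v : E2, v = ‖n‖⁻¹ • n := ⟨_, rfl⟩
  have hvn : ‖v‖ = 1 := by rw [hv_def]; exact norm_smul_inv_norm hnne
  have hvne : v ≠ 0 := by intro h; rw [h, norm_zero] at hvn; norm_num at hvn
  have ivGC : ⟪v, G - C⟫ = 0 := by rw [hv_def, real_inner_smul_left, inGC]; simp
  have ivBC : ⟪v, B - C⟫ < 0 := by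
    rw [hv_def, real_inner_smul_left]
    exact mul_neg_of_pos_of_neg (by positivity) inBCneg
  -- C - F
  have hCF : C - F = -(2⁻¹ : ℝ) • (B - C) := by
    have h := right_vsub_midpoint (R := ℝ) B C
    rw [← hF, vsub_eq_sub, vsub_eq_sub,
      show ((⅟2 : ℝ)) = (2⁻¹ : ℝ) from by norm_num] at h
    rw [h]
    module
  have inQ : (⟪n, Q⟫ : ℝ) = (t - 1) * a ^ 2 := by
    rw [hn, real_inner_smul_left, iuQ]
  have ivCF : ⟪v, C - F⟫ = a ^ 2 / (2 * c) := by
    rw [hCF, real_inner_smul_right, hv_def, real_inner_smul_left, ← hQ, inQ, hnu]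
    exact sc_cf t c a ht1 hc'
  -- the set equality
  obtain ⟨dval, hdval⟩ : ∃ x : ℝ, x = a ^ 2 / (2 * c) := ⟨_, rfl⟩
  have hdnn : 0 ≤ dval := by rw [hdval]; positivity
  have hac : a < c := sc_alt a b c ha hb hcnn hc2
  have hdr : dval < a / 2 := by
    rw [hdval]
    exact sc_dr a c ha hac
  have hseteq : {x : E2 | dist x F ≤ a / 2 ∧ (affineSpan ℝ {C, G}).SOppSide x B}
      = {x : E2 | dist x F ≤ a / 2 ∧ dval < ⟪v, x - F⟫} := by
    ext x
    simp only [Set.mem_setOf_eq]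
    refine and_congr_right fun _ => ?_
    rw [sOppSide_iff_inner v C G B hvne hGCne ivGC ivBC x]
    have hxsplit : (x : E2) - C = (x - F) - (C - F) := by abel
    rw [hxsplit, inner_sub_right, ivCF, hdval]
    constructor <;> intro h <;> linarith
  -- angle θ
  have hCA : C - A = -P := by rw [hP]; abel
  have hcos : Real.cos θ = b / c := by
    rw [hθ, show (∠ B A C) = InnerProductGeometry.angle (B - A) (C - A) from rfl,
      InnerProductGeometry.cos_angle, hBA, hCA]
    rw [inner_neg_right, iuP, norm_neg, hnc, hnb]
    exact sc_cos b c (ne_of_gt hb)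
  have hθ0 : 0 ≤ θ := by rw [hθ]; exact InnerProductGeometry.angle_nonneg _ _
  have hθpi : θ ≤ π := by rw [hθ]; exact InnerProductGeometry.angle_le_pi _ _
  have hθhalf : θ ≤ π / 2 := by
    by_contra hcon
    push_neg at hcon
    have h1 := Real.cos_nonpos_of_pi_div_two_le_of_le hcon.le (by linarith [Real.pi_pos])
    rw [hcos] at h1
    have h2 : 0 < b / c := by positivity
    linarith
  have hsinθ : Real.sin θ = a / c := by
    rw [Real.sin_eq_sqrt_one_sub_cos_sq hθ0 hθpi, hcos]
    rw [sc_sin a b c hcne hc2]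
    exact Real.sqrt_sq (by positivity)
  have harcsin : Real.arcsin (dval / (a / 2)) = θ := by
    rw [hdval, sc_ratio a c (ne_of_gt ha) hcne, ← hsinθ,
      Real.arcsin_sin (by linarith) hθhalf]
  -- finish
  rw [hseteq, halfdisc_area v F hvn (a / 2) dval hdnn hdr, integral_step _ _ hdnn hdr,
    harcsin]
  congr 1
  have hsq : Real.sqrt ((a / 2) ^ 2 - dval ^ 2) = a * b / (2 * c) := by
    rw [hdval, sc_sq a b c hcne hc2]
    exact Real.sqrt_sq (by positivity)
  rw [hsq, hdval]
  exact sc_fin a b c θ hcne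

end
end
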